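/- arXiv:2309.02441 — 8 statements merged into one kernel-verified Lean document; each statement's English description precedes it below -/
import Mathlib

section
/- Let v1,v2,v3,v4 ∈ ℝ² form a convex quadrilateral in counterclockwise cyclic order and let Q be their convex hull. Then for every p ∈ Q there exist α, β, γ ∈ [0,1] such that p = (1−γ)·((1−α)v4 + α v1) + γ·((1−β)v2 + β v3) and d1(p)·(1−γ)α − d2(p)·γ(1−β) + d3(p)·γβ − d4(p)·(1−γ)(1−α) = 0. -/
open Matrix

/-- Signed area of the triangle `(a,b,c)` in the plane. -/
noncomputable def sArea (a b c : EuclideanSpace ℝ (Fin 2)) : ℝ :=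
  ((b 0 - a 0) * (c 1 - a 1) - (b 1 - a 1) * (c 0 - a 0)) / 2

/-- `v` lists the vertices of a convex quadrilateral in counterclockwise cyclic order. -/
def ConvexCCW (v : Fin 4 → EuclideanSpace ℝ (Fin 2)) : Prop :=
  ∀ i : Fin 4, 0 < sArea (v i) (v (i + 1)) (v (i + 2))

lemma exists_weights (v0 v1 v2 v3 p : EuclideanSpace ℝ (Fin 2))
    (hp : p ∈ convexHull ℝ {v0, v1, v2, v3}) :
    ∃ w0 w1 w2 w3 : ℝ, 0 ≤ w0 ∧ 0 ≤ w1 ∧ 0 ≤ w2 ∧ 0 ≤ w3 ∧ w0 + w1 + w2 + w3 = 1 ∧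
      w0 • v0 + w1 • v1 + w2 • v2 + w3 • v3 = p := by
  have hset : ({v0, v1, v2, v3} : Set (EuclideanSpace ℝ (Fin 2)))
      = {v0, v1} ∪ {v2, v3} := by
    ext x; simp only [Set.mem_insert_iff, Set.mem_singleton_iff, Set.mem_union]; tauto
  rw [hset, convexHull_union (by simp) (by simp), mem_convexJoin] at hp
  obtain ⟨a, ha, b, hb, hab⟩ := hp
  rw [convexHull_pair] at ha hb
  obtain ⟨t, t', ht, ht', htt, rfl⟩ := ha
  obtain ⟨u, u', hu, hu', huu, rfl⟩ := hb
  obtain ⟨c, c', hc, hc', hcc, rfl⟩ := hab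
  refine ⟨c * t, c * t', c' * u, c' * u', by positivity, by positivity, by positivity,
    by positivity, by nlinarith, by module⟩

lemma diag_inter (v : Fin 4 → EuclideanSpace ℝ (Fin 2)) (hccw : ConvexCCW v) :
    ∃ r s : ℝ, 0 < r ∧ r < 1 ∧ 0 < s ∧ s < 1 ∧
      (1 - r) • v 0 + r • v 2 = (1 - s) • v 1 + s • v 3 := by
  have h0 : 0 < sArea (v 0) (v 1) (v 2) := hccw 0
  have h1 : 0 < sArea (v 1) (v 2) (v 3) := hccw 1
  have h2 : 0 < sArea (v 2) (v 3) (v 0) := hccw 2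
  have h3 : 0 < sArea (v 3) (v 0) (v 1) := hccw 3
  set S0 := sArea (v 0) (v 1) (v 2) with hS0
  set S1 := sArea (v 1) (v 2) (v 3) with hS1
  set S2 := sArea (v 2) (v 3) (v 0) with hS2
  set S3 := sArea (v 3) (v 0) (v 1) with hS3
  have hDsum : S0 + S2 = S1 + S3 := by
    simp only [hS0, hS1, hS2, hS3, sArea]; ring
  have hD : 0 < S0 + S2 := by linarith
  refine ⟨S3 / (S0 + S2), S0 / (S0 + S2), by positivity, ?_, by positivity, ?_, ?_⟩
  · rw [div_lt_one hD]; linarith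
  · rw [div_lt_one hD]; linarith
  · ext i
    have hx : ∀ (a : ℝ) (x y : EuclideanSpace ℝ (Fin 2)), (a • x + y) i = a * x i + y i := by
      intro a x y; rfl
    have hx2 : ∀ (a : ℝ) (x : EuclideanSpace ℝ (Fin 2)), (a • x) i = a * x i := by
      intro a x; rfl
    rw [hx, hx, hx2, hx2]
    have hi : i = 0 ∨ i = 1 := by omega
    have hDne : S0 + S2 ≠ 0 := ne_of_gt hD
    rcases hi with rfl | rfl <;>
      · field_simp
        simp only [hS0, hS1, hS2, hS3, sArea]
        ring

section Ftest
variable (v0 v1 v2 v3 p : EuclideanSpace ℝ (Fin 2))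

lemma weights_vec (u0 u1 u2 u3 : ℝ) (hsum : u0 + u1 + u2 + u3 = 1)
    (hrep : u0 • v0 + u1 • v1 + u2 • v2 + u3 • v3 = p) :
    u0 • (p - v0) + u1 • (p - v1) + u2 • (p - v2) + u3 • (p - v3) = 0 := by
  have : u0 • (p - v0) + u1 • (p - v1) + u2 • (p - v2) + u3 • (p - v3)
      = (u0 + u1 + u2 + u3) • p - (u0 • v0 + u1 • v1 + u2 • v2 + u3 • v3) := by module
  rw [this, hsum, hrep, one_smul, sub_self]

lemma F_nonneg (u0 u1 u2 u3 : ℝ) (h0 : 0 ≤ u0) (h1 : 0 ≤ u1) (h2 : 0 ≤ u2) (h3 : 0 ≤ u3)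
    (hsum : u0 + u1 + u2 + u3 = 1)
    (hrep : u0 • v0 + u1 • v1 + u2 • v2 + u3 • v3 = p)
    (hz : u1 = 0 ∨ u3 = 0) :
    0 ≤ ‖p - v0‖ * u0 - ‖p - v1‖ * u1 + ‖p - v2‖ * u2 - ‖p - v3‖ * u3 := by
  have hvec := weights_vec v0 v1 v2 v3 p u0 u1 u2 u3 hsum hrep
  rcases hz with hz | hz
  · have e : u3 • (p - v3) = -(u0 • (p - v0) + u2 • (p - v2)) := by
      rw [hz] at hvec; linear_combination (norm := module) hvec
    have key : ‖p - v3‖ * u3 ≤ ‖p - v0‖ * u0 + ‖p - v2‖ * u2 := by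
      have := calc ‖u3 • (p - v3)‖ = ‖u0 • (p - v0) + u2 • (p - v2)‖ := by rw [e, norm_neg]
        _ ≤ ‖u0 • (p - v0)‖ + ‖u2 • (p - v2)‖ := norm_add_le _ _
      simpa [norm_smul, Real.norm_of_nonneg, h0, h2, h3, abs_of_nonneg,
        mul_comm] using this
    have hn1 : 0 ≤ ‖p - v1‖ * u1 := by positivity
    rw [hz]; simp only [mul_zero]; linarith
  · have e : u1 • (p - v1) = -(u0 • (p - v0) + u2 • (p - v2)) := by
      rw [hz] at hvec; linear_combination (norm := module) hvec
    have key : ‖p - v1‖ * u1 ≤ ‖p - v0‖ * u0 + ‖p - v2‖ * u2 := by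
      have := calc ‖u1 • (p - v1)‖ = ‖u0 • (p - v0) + u2 • (p - v2)‖ := by rw [e, norm_neg]
        _ ≤ ‖u0 • (p - v0)‖ + ‖u2 • (p - v2)‖ := norm_add_le _ _
      simpa [norm_smul, Real.norm_of_nonneg, h0, h1, h2, abs_of_nonneg,
        mul_comm] using this
    rw [hz]; simp only [mul_zero]; linarith

lemma F_nonpos (u0 u1 u2 u3 : ℝ) (h0 : 0 ≤ u0) (h1 : 0 ≤ u1) (h2 : 0 ≤ u2) (h3 : 0 ≤ u3)
    (hsum : u0 + u1 + u2 + u3 = 1)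
    (hrep : u0 • v0 + u1 • v1 + u2 • v2 + u3 • v3 = p)
    (hz : u0 = 0 ∨ u2 = 0) :
    ‖p - v0‖ * u0 - ‖p - v1‖ * u1 + ‖p - v2‖ * u2 - ‖p - v3‖ * u3 ≤ 0 := by
  have hvec := weights_vec v0 v1 v2 v3 p u0 u1 u2 u3 hsum hrep
  rcases hz with hz | hz
  · have e : u2 • (p - v2) = -(u1 • (p - v1) + u3 • (p - v3)) := by
      rw [hz] at hvec; linear_combination (norm := module) hvec
    have key : ‖p - v2‖ * u2 ≤ ‖p - v1‖ * u1 + ‖p - v3‖ * u3 := by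
      have := calc ‖u2 • (p - v2)‖ = ‖u1 • (p - v1) + u3 • (p - v3)‖ := by rw [e, norm_neg]
        _ ≤ ‖u1 • (p - v1)‖ + ‖u3 • (p - v3)‖ := norm_add_le _ _
      simpa [norm_smul, Real.norm_of_nonneg, h1, h2, h3, abs_of_nonneg,
        mul_comm] using this
    rw [hz]; simp only [mul_zero]; linarith
  · have e : u0 • (p - v0) = -(u1 • (p - v1) + u3 • (p - v3)) := by
      rw [hz] at hvec; linear_combination (norm := module) hvec
    have key : ‖p - v0‖ * u0 ≤ ‖p - v1‖ * u1 + ‖p - v3‖ * u3 := by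
      have := calc ‖u0 • (p - v0)‖ = ‖u1 • (p - v1) + u3 • (p - v3)‖ := by rw [e, norm_neg]
        _ ≤ ‖u1 • (p - v1)‖ + ‖u3 • (p - v3)‖ := norm_add_le _ _
      simpa [norm_smul, Real.norm_of_nonneg, h0, h1, h3, abs_of_nonneg,
        mul_comm] using this
    rw [hz]; simp only [mul_zero]; linarith

end Ftest

-- shift weights along the diagonal relation to kill u1 or u3
lemma shift13 (v0 v1 v2 v3 p : EuclideanSpace ℝ (Fin 2)) (r s : ℝ)
    (hr0 : 0 < r) (hr1 : r < 1) (hs0 : 0 < s) (hs1 : s < 1)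
    (hq : (1 - r) • v0 + r • v2 = (1 - s) • v1 + s • v3)
    (w0 w1 w2 w3 : ℝ) (h0 : 0 ≤ w0) (h1 : 0 ≤ w1) (h2 : 0 ≤ w2) (h3 : 0 ≤ w3)
    (hsum : w0 + w1 + w2 + w3 = 1)
    (hrep : w0 • v0 + w1 • v1 + w2 • v2 + w3 • v3 = p) :
    ∃ u0 u1 u2 u3 : ℝ, 0 ≤ u0 ∧ 0 ≤ u1 ∧ 0 ≤ u2 ∧ 0 ≤ u3 ∧
      u0 + u1 + u2 + u3 = 1 ∧ u0 • v0 + u1 • v1 + u2 • v2 + u3 • v3 = p ∧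
      (u1 = 0 ∨ u3 = 0) := by
  have hs1' : 0 < 1 - s := by linarith
  set c := min (w1 / (1 - s)) (w3 / s) with hc
  have hc0 : 0 ≤ c := le_min (by positivity) (by positivity)
  have hc1 : c * (1 - s) ≤ w1 := by
    have := min_le_left (w1 / (1 - s)) (w3 / s)
    rw [← hc] at this
    calc c * (1 - s) ≤ (w1 / (1 - s)) * (1 - s) := by nlinarith
      _ = w1 := by field_simp
  have hc3 : c * s ≤ w3 := by
    have := min_le_right (w1 / (1 - s)) (w3 / s)
    rw [← hc] at this
    calc c * s ≤ (w3 / s) * s := by nlinarith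
      _ = w3 := by field_simp
  refine ⟨w0 + c * (1 - r), w1 - c * (1 - s), w2 + c * r, w3 - c * s,
    add_nonneg h0 (mul_nonneg hc0 (by linarith)), by linarith,
    add_nonneg h2 (mul_nonneg hc0 (by linarith)), by linarith, by linarith, ?_, ?_⟩
  · have expand : (w0 + c * (1 - r)) • v0 + (w1 - c * (1 - s)) • v1 + (w2 + c * r) • v2
        + (w3 - c * s) • v3
        = (w0 • v0 + w1 • v1 + w2 • v2 + w3 • v3)
          + c • ((1 - r) • v0 + r • v2 - ((1 - s) • v1 + s • v3)) := by module
    rw [expand, hq, sub_self, smul_zero, add_zero, hrep]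
  · rcases min_cases (w1 / (1 - s)) (w3 / s) with ⟨hm, _⟩ | ⟨hm, _⟩
    · left; rw [← hc] at hm; rw [hm]; field_simp; ring
    · right; rw [← hc] at hm; rw [hm]; field_simp; ring

lemma shift02 (v0 v1 v2 v3 p : EuclideanSpace ℝ (Fin 2)) (r s : ℝ)
    (hr0 : 0 < r) (hr1 : r < 1) (hs0 : 0 < s) (hs1 : s < 1)
    (hq : (1 - r) • v0 + r • v2 = (1 - s) • v1 + s • v3)
    (w0 w1 w2 w3 : ℝ) (h0 : 0 ≤ w0) (h1 : 0 ≤ w1) (h2 : 0 ≤ w2) (h3 : 0 ≤ w3)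
    (hsum : w0 + w1 + w2 + w3 = 1)
    (hrep : w0 • v0 + w1 • v1 + w2 • v2 + w3 • v3 = p) :
    ∃ u0 u1 u2 u3 : ℝ, 0 ≤ u0 ∧ 0 ≤ u1 ∧ 0 ≤ u2 ∧ 0 ≤ u3 ∧
      u0 + u1 + u2 + u3 = 1 ∧ u0 • v0 + u1 • v1 + u2 • v2 + u3 • v3 = p ∧
      (u0 = 0 ∨ u2 = 0) := by
  have hr1' : 0 < 1 - r := by linarith
  set c := min (w0 / (1 - r)) (w2 / r) with hc
  have hc0 : 0 ≤ c := le_min (by positivity) (by positivity)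
  have hc1 : c * (1 - r) ≤ w0 := by
    have := min_le_left (w0 / (1 - r)) (w2 / r)
    rw [← hc] at this
    calc c * (1 - r) ≤ (w0 / (1 - r)) * (1 - r) := by nlinarith
      _ = w0 := by field_simp
  have hc3 : c * r ≤ w2 := by
    have := min_le_right (w0 / (1 - r)) (w2 / r)
    rw [← hc] at this
    calc c * r ≤ (w2 / r) * r := by nlinarith
      _ = w2 := by field_simp
  refine ⟨w0 - c * (1 - r), w1 + c * (1 - s), w2 - c * r, w3 + c * s,
    by linarith, add_nonneg h1 (mul_nonneg hc0 (by linarith)), by linarith,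
    add_nonneg h3 (mul_nonneg hc0 (by linarith)), by linarith, ?_, ?_⟩
  · have expand : (w0 - c * (1 - r)) • v0 + (w1 + c * (1 - s)) • v1 + (w2 - c * r) • v2
        + (w3 + c * s) • v3
        = (w0 • v0 + w1 • v1 + w2 • v2 + w3 • v3)
          - c • ((1 - r) • v0 + r • v2 - ((1 - s) • v1 + s • v3)) := by module
    rw [expand, hq, sub_self, smul_zero, sub_zero, hrep]
  · rcases min_cases (w0 / (1 - r)) (w2 / r) with ⟨hm, _⟩ | ⟨hm, _⟩
    · left; rw [← hc] at hm; rw [hm]; field_simp; ring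
    · right; rw [← hc] at hm; rw [hm]; field_simp; ring

-- split a nonnegative pair
lemma pair_split (a b : ℝ) (ha : 0 ≤ a) (hb : 0 ≤ b) :
    ∃ t : ℝ, t ∈ Set.Icc (0:ℝ) 1 ∧ (a + b) * t = a ∧ (a + b) * (1 - t) = b := by
  by_cases h : a + b = 0
  · exact ⟨0, ⟨le_refl 0, zero_le_one⟩, by nlinarith, by nlinarith⟩
  · have hpos : 0 < a + b := lt_of_le_of_ne (by linarith) (Ne.symm h)
    refine ⟨a / (a + b), ⟨by positivity, by rw [div_le_one hpos]; linarith⟩, ?_, ?_⟩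
    · field_simp
    · field_simp; ring

lemma interp_zero (x y : ℝ) (hx : 0 ≤ x) (hy : y ≤ 0) :
    ∃ t : ℝ, 0 ≤ t ∧ t ≤ 1 ∧ (1 - t) * x + t * y = 0 := by
  by_cases h : x - y = 0
  · exact ⟨0, le_refl 0, zero_le_one, by nlinarith⟩
  · have hpos : 0 < x - y := lt_of_le_of_ne (by linarith) (Ne.symm h)
    exact ⟨x / (x - y), by positivity, by rw [div_le_one hpos]; linarith,
      by field_simp; ring⟩

/-- For every point `p` of a convex quadrilateral `Q = conv{v₁,v₂,v₃,v₄}`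
(counterclockwise order) there exist `α, β, γ ∈ [0,1]` with
`p = (1-γ)((1-α)v₄ + αv₁) + γ((1-β)v₂ + βv₃)` and
`d₁(p)(1-γ)α - d₂(p)γ(1-β) + d₃(p)γβ - d₄(p)(1-γ)(1-α) = 0`,
where `dᵢ(p) = ‖p - vᵢ‖`. -/
theorem moment_condition_exists (v : Fin 4 → EuclideanSpace ℝ (Fin 2))
    (hccw : ConvexCCW v) (p : EuclideanSpace ℝ (Fin 2))
    (hp : p ∈ convexHull ℝ {v 0, v 1, v 2, v 3}) :
    ∃ α β γ : ℝ, α ∈ Set.Icc (0 : ℝ) 1 ∧ β ∈ Set.Icc (0 : ℝ) 1 ∧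
      γ ∈ Set.Icc (0 : ℝ) 1 ∧
      p = (1 - γ) • ((1 - α) • v 3 + α • v 0) + γ • ((1 - β) • v 1 + β • v 2) ∧
      ‖p - v 0‖ * ((1 - γ) * α) - ‖p - v 1‖ * (γ * (1 - β)) +
        ‖p - v 2‖ * (γ * β) - ‖p - v 3‖ * ((1 - γ) * (1 - α)) = 0 := by
  obtain ⟨w0, w1, w2, w3, hw0, hw1, hw2, hw3, hwsum, hwrep⟩ :=
    exists_weights (v 0) (v 1) (v 2) (v 3) p hp
  obtain ⟨r, s, hr0, hr1, hs0, hs1, hq⟩ := diag_inter v hccw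
  obtain ⟨a0, a1, a2, a3, ha0, ha1, ha2, ha3, hasum, harep, haz⟩ :=
    shift13 (v 0) (v 1) (v 2) (v 3) p r s hr0 hr1 hs0 hs1 hq
      w0 w1 w2 w3 hw0 hw1 hw2 hw3 hwsum hwrep
  obtain ⟨b0, b1, b2, b3, hb0, hb1, hb2, hb3, hbsum, hbrep, hbz⟩ :=
    shift02 (v 0) (v 1) (v 2) (v 3) p r s hr0 hr1 hs0 hs1 hq
      w0 w1 w2 w3 hw0 hw1 hw2 hw3 hwsum hwrep
  have hFa : 0 ≤ ‖p - v 0‖ * a0 - ‖p - v 1‖ * a1 + ‖p - v 2‖ * a2 - ‖p - v 3‖ * a3 :=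
    F_nonneg (v 0) (v 1) (v 2) (v 3) p a0 a1 a2 a3 ha0 ha1 ha2 ha3 hasum harep haz
  have hFb : ‖p - v 0‖ * b0 - ‖p - v 1‖ * b1 + ‖p - v 2‖ * b2 - ‖p - v 3‖ * b3 ≤ 0 :=
    F_nonpos (v 0) (v 1) (v 2) (v 3) p b0 b1 b2 b3 hb0 hb1 hb2 hb3 hbsum hbrep hbz
  obtain ⟨t, ht0, ht1, htF⟩ := interp_zero _ _ hFa hFb
  have h1t : 0 ≤ 1 - t := by linarith
  -- interpolated weights
  set u0 := (1 - t) * a0 + t * b0 with hu0d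
  set u1 := (1 - t) * a1 + t * b1 with hu1d
  set u2 := (1 - t) * a2 + t * b2 with hu2d
  set u3 := (1 - t) * a3 + t * b3 with hu3d
  have hu0 : 0 ≤ u0 := add_nonneg (mul_nonneg h1t ha0) (mul_nonneg ht0 hb0)
  have hu1 : 0 ≤ u1 := add_nonneg (mul_nonneg h1t ha1) (mul_nonneg ht0 hb1)
  have hu2 : 0 ≤ u2 := add_nonneg (mul_nonneg h1t ha2) (mul_nonneg ht0 hb2)
  have hu3 : 0 ≤ u3 := add_nonneg (mul_nonneg h1t ha3) (mul_nonneg ht0 hb3)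
  have husum : u0 + u1 + u2 + u3 = 1 := by
    rw [hu0d, hu1d, hu2d, hu3d]
    linear_combination (1 - t) * hasum + t * hbsum
  have hurep : u0 • v 0 + u1 • v 1 + u2 • v 2 + u3 • v 3 = p := by
    rw [hu0d, hu1d, hu2d, hu3d]
    have expand : ((1 - t) * a0 + t * b0) • v 0 + ((1 - t) * a1 + t * b1) • v 1
        + ((1 - t) * a2 + t * b2) • v 2 + ((1 - t) * a3 + t * b3) • v 3
        = (1 - t) • (a0 • v 0 + a1 • v 1 + a2 • v 2 + a3 • v 3)
          + t • (b0 • v 0 + b1 • v 1 + b2 • v 2 + b3 • v 3) := by module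
    rw [expand, harep, hbrep]
    module
  have hFu : ‖p - v 0‖ * u0 - ‖p - v 1‖ * u1 + ‖p - v 2‖ * u2 - ‖p - v 3‖ * u3 = 0 := by
    rw [hu0d, hu1d, hu2d, hu3d]
    linear_combination htF
  -- convert weights to α, β, γ
  obtain ⟨α, hαmem, hα1, hα2⟩ := pair_split u0 u3 hu0 hu3
  obtain ⟨β, hβmem, hβ1, hβ2⟩ := pair_split u2 u1 hu2 hu1
  have e0 : (1 - (u1 + u2)) * α = u0 := by linear_combination hα1 - α * husum
  have e3 : (1 - (u1 + u2)) * (1 - α) = u3 := by linear_combination hα2 - (1 - α) * husum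
  have e1 : (u1 + u2) * (1 - β) = u1 := by linear_combination hβ2
  have e2 : (u1 + u2) * β = u2 := by linear_combination hβ1
  refine ⟨α, β, u1 + u2, hαmem, hβmem, ⟨add_nonneg hu1 hu2, by linarith⟩, ?_, ?_⟩
  · have key : (1 - (u1 + u2)) • ((1 - α) • v 3 + α • v 0)
        + (u1 + u2) • ((1 - β) • v 1 + β • v 2)
        = ((1 - (u1 + u2)) * α) • v 0 + ((u1 + u2) * (1 - β)) • v 1
          + ((u1 + u2) * β) • v 2 + ((1 - (u1 + u2)) * (1 - α)) • v 3 := by module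
    rw [key, e0, e1, e2, e3, hurep]
  · rw [e0, e1, e2, e3]
    exact hFu
end

section
/- Let n ≥ 4, let 0 ≤ x1 < x2 < ⋯ < xn ≤ 1 and let p ∈ [x1, x2]. Define the n×n matrix whose first row is (1,1,…,1), whose second row has j-th entry x_j − p, whose third row has j-th entry (−1)^{j+1}|x_j − p|, and whose (k+3)-rd row (for k = 1,…,n−3) has entry 1 in columns k+2 and k+3 and entry 0 elsewhere. Then this matrix is invertible, and the unique solution φ ∈ ℝ^n of the linear system with right-hand side (1,0,0,…,0) is componentwise nonnegative. -/
open Matrix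

lemma moment_aux (n : ℕ) (hn : n ≥ 4) (x : Fin n → ℝ) (hx : StrictMono x)
    (p : ℝ) (hp0 : x ⟨0, by omega⟩ ≤ p) (hp1 : p ≤ x ⟨1, by omega⟩)
    (c : ℝ) (φ : Fin n → ℝ)
    (h : (Matrix.of fun i j : Fin n =>
        if (i : ℕ) = 0 then (1 : ℝ)
        else if (i : ℕ) = 1 then x j - p
        else if (i : ℕ) = 2 then (-1) ^ ((j : ℕ) + 1 + 1) * |x j - p|
        else if (j : ℕ) = (i : ℕ) - 1 ∨ (j : ℕ) = (i : ℕ) then 1 else 0).mulVec φ =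
        (fun i : Fin n => if (i : ℕ) = 0 then c else 0)) :
    (∀ j : Fin n, 2 ≤ (j : ℕ) → φ j = 0) ∧
    φ ⟨0, by omega⟩ + φ ⟨1, by omega⟩ = c ∧
    (x ⟨0, by omega⟩ - p) * φ ⟨0, by omega⟩ + (x ⟨1, by omega⟩ - p) * φ ⟨1, by omega⟩ = 0 := by
  have hrow : ∀ i : Fin n, (∑ j : Fin n, (if (i : ℕ) = 0 then (1 : ℝ)
        else if (i : ℕ) = 1 then x j - p
        else if (i : ℕ) = 2 then (-1) ^ ((j : ℕ) + 1 + 1) * |x j - p|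
        else if (j : ℕ) = (i : ℕ) - 1 ∨ (j : ℕ) = (i : ℕ) then 1 else 0) * φ j)
        = (if (i : ℕ) = 0 then c else 0) := by
    intro i
    have := congrFun h i
    simpa [Matrix.mulVec, dotProduct] using this
  have e0 : ∑ j : Fin n, φ j = c := by
    have := hrow ⟨0, by omega⟩
    simpa using this
  have e1 : ∑ j : Fin n, (x j - p) * φ j = 0 := by
    have := hrow ⟨1, by omega⟩
    simpa using this
  have e2 : ∑ j : Fin n, ((-1:ℝ) ^ ((j:ℕ) + 1 + 1) * |x j - p|) * φ j = 0 := by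
    have := hrow ⟨2, by omega⟩
    simpa using this
  have single : ∀ (m : ℕ) (hm : m < n),
      ∑ j : Fin n, (if (j:ℕ) = m then (1:ℝ) else 0) * φ j = φ ⟨m, hm⟩ := by
    intro m hm
    rw [Finset.sum_eq_single (⟨m, hm⟩ : Fin n)]
    · simp
    · intro b _ hb
      rw [if_neg, zero_mul]
      intro hbm
      exact hb (Fin.ext hbm)
    · simp
  have epair : ∀ (k : ℕ), 3 ≤ k → ∀ (hk : k < n),
      φ ⟨k - 1, by omega⟩ + φ ⟨k, hk⟩ = 0 := by
    intro k hk3 hk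
    have hr := hrow ⟨k, hk⟩
    have key : ∀ j : Fin n, (if ((⟨k, hk⟩ : Fin n) : ℕ) = 0 then (1:ℝ)
        else if ((⟨k, hk⟩ : Fin n) : ℕ) = 1 then x j - p
        else if ((⟨k, hk⟩ : Fin n) : ℕ) = 2 then (-1) ^ ((j : ℕ) + 1 + 1) * |x j - p|
        else if (j : ℕ) = ((⟨k, hk⟩ : Fin n) : ℕ) - 1 ∨ (j : ℕ) = ((⟨k, hk⟩ : Fin n) : ℕ)
          then 1 else 0) * φ j
        = (if (j:ℕ) = k - 1 then (1:ℝ) else 0) * φ j + (if (j:ℕ) = k then (1:ℝ) else 0) * φ j := by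
      intro j
      simp only [Fin.val_mk]
      rw [if_neg (by omega), if_neg (by omega), if_neg (by omega)]
      by_cases h1 : (j:ℕ) = k - 1 <;> by_cases h2 : (j:ℕ) = k <;>
        simp [h1, h2] <;> omega
    rw [Finset.sum_congr rfl (fun j _ => key j), Finset.sum_add_distrib,
      single (k-1) (by omega), single k hk] at hr
    rw [if_neg (by simp; omega)] at hr
    exact hr
  have alt : ∀ k, 2 ≤ k → ∀ (hk : k < n), φ ⟨k, hk⟩ = (-1:ℝ)^k * φ ⟨2, by omega⟩ := by
    intro k
    induction k with
    | zero => omega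
    | succ m ih =>
      intro h2 hk
      rcases Nat.lt_or_ge m 2 with hm | hm
      · have hm1 : m = 1 := by omega
        subst hm1
        norm_num
      · have hmn : m < n := by omega
        have e := epair (m+1) (by omega) hk
        have hih := ih hm hmn
        have hstep : φ ⟨m+1, hk⟩ = -φ ⟨m, hmn⟩ := by
          have : φ ⟨m+1-1, by omega⟩ = φ ⟨m, hmn⟩ := by congr 1
          linarith [e, this]
        rw [hstep, hih, pow_succ]
        ring
  have hxgt : ∀ j : Fin n, 2 ≤ (j:ℕ) → 0 < x j - p := by
    intro j hj
    have : x ⟨1, by omega⟩ < x j := hx (by rw [Fin.lt_def]; simpa using by omega)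
    linarith
  have hxge : ∀ j : Fin n, 1 ≤ (j:ℕ) → 0 ≤ x j - p := by
    intro j hj
    have : x ⟨1, by omega⟩ ≤ x j := hx.monotone (by rw [Fin.le_def]; simpa using hj)
    linarith
  have e12 : ∑ j : Fin n, ((x j - p) + (-1:ℝ)^((j:ℕ)+1+1) * |x j - p|) * φ j = 0 := by
    simp only [add_mul, Finset.sum_add_distrib, e1, e2, add_zero]
  have hterm : ∀ j : Fin n, ((x j - p) + (-1:ℝ)^((j:ℕ)+1+1) * |x j - p|) * φ j
      = (if Even (j:ℕ) ∧ 2 ≤ (j:ℕ) then 2*(x j - p) else 0) * φ ⟨2, by omega⟩ := by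
    rintro ⟨jv, hjv⟩
    by_cases hj2 : 2 ≤ jv
    · have habs : |x ⟨jv, hjv⟩ - p| = x ⟨jv, hjv⟩ - p :=
        abs_of_nonneg (hxge _ (by simpa using by omega))
      have hφ := alt jv hj2 hjv
      simp only [Fin.val_mk] at *
      rw [habs, hφ]
      have hpow : (-1:ℝ)^(jv+1+1) = (-1:ℝ)^jv := by
        rw [pow_succ, pow_succ]; ring
      rcases Nat.even_or_odd jv with he | ho
      · rw [if_pos ⟨he, hj2⟩, hpow, he.neg_one_pow]; ring
      · rw [if_neg (fun hcon => Nat.not_even_iff_odd.mpr ho hcon.1), hpow,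
          ho.neg_one_pow]; ring
    · interval_cases jv
      · have hp0' : x ⟨0, hjv⟩ ≤ p := hp0
        have habs : |x ⟨0, hjv⟩ - p| = -(x ⟨0, hjv⟩ - p) := abs_of_nonpos (by linarith)
        rw [habs]
        norm_num
      · have hp1' : p ≤ x ⟨1, hjv⟩ := hp1
        have habs : |x ⟨1, hjv⟩ - p| = x ⟨1, hjv⟩ - p := abs_of_nonneg (by linarith)
        rw [habs]
        norm_num
  have e12' : (∑ j : Fin n, (if Even (j:ℕ) ∧ 2 ≤ (j:ℕ) then 2*(x j - p) else 0))
      * φ ⟨2, by omega⟩ = 0 := by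
    rw [Finset.sum_mul]
    rw [Finset.sum_congr rfl (fun j _ => (hterm j).symm)]
    exact e12
  have hsumpos : 0 < ∑ j : Fin n, (if Even (j:ℕ) ∧ 2 ≤ (j:ℕ) then 2*(x j - p) else 0) := by
    apply Finset.sum_pos'
    · intro j _
      split_ifs with hj
      · have := hxgt j hj.2
        linarith
      · exact le_refl 0
    · refine ⟨⟨2, by omega⟩, Finset.mem_univ _, ?_⟩
      rw [if_pos (by constructor <;> simp [Nat.even_iff])]
      have := hxgt ⟨2, by omega⟩ (by simp)
      linarith
  have hφ2 : φ ⟨2, by omega⟩ = 0 := by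
    rcases mul_eq_zero.mp e12' with h' | h'
    · exact absurd h' (ne_of_gt hsumpos)
    · exact h'
  have part1 : ∀ j : Fin n, 2 ≤ (j:ℕ) → φ j = 0 := by
    rintro ⟨jv, hjv⟩ hj
    simp only [Fin.val_mk] at hj
    rw [alt jv hj hjv, hφ2, mul_zero]
  have sum2 : ∀ g : Fin n → ℝ, (∀ j : Fin n, 2 ≤ (j:ℕ) → g j = 0) →
      ∑ j : Fin n, g j = g ⟨0, by omega⟩ + g ⟨1, by omega⟩ := by
    intro g hg
    rw [← Finset.sum_pair (a := (⟨0, by omega⟩ : Fin n)) (b := ⟨1, by omega⟩)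
      (by simp [Fin.ext_iff])]
    refine (Finset.sum_subset (Finset.subset_univ _) ?_).symm
    intro j _ hj
    apply hg
    simp only [Finset.mem_insert, Finset.mem_singleton, Fin.ext_iff] at hj
    push_neg at hj
    omega
  refine ⟨part1, ?_, ?_⟩
  · rw [← e0, sum2 φ part1]
  · rw [← e1, sum2 (fun j => (x j - p) * φ j) (fun j hj => by show (x j - p) * φ j = 0; rw [part1 j hj, mul_zero])]

/-- For `n ≥ 4` nodes `0 ≤ x₁ < ⋯ < xₙ ≤ 1` and `p ∈ [x₁, x₂]`, the `n×n`
matrix whose first row is all ones, whose second row is `xⱼ - p`, whose third row is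
`(-1)^{j+1}|xⱼ - p|` (columns indexed `j = 1,…,n`), and whose `(k+3)`-rd row
(`k = 1,…,n-3`) has ones exactly in columns `k+2` and `k+3`, is invertible, and the
unique solution of the system with right-hand side `(1,0,…,0)` is componentwise
nonnegative. -/
theorem moment_1d_n_nodes (n : ℕ) (hn : 4 ≤ n) (x : Fin n → ℝ) (hx : StrictMono x)
    (h0 : 0 ≤ x ⟨0, by omega⟩) (h1 : x ⟨n - 1, by omega⟩ ≤ 1)
    (p : ℝ) (hp : p ∈ Set.Icc (x ⟨0, by omega⟩) (x ⟨1, by omega⟩)) :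
    IsUnit (Matrix.of fun i j : Fin n =>
        if (i : ℕ) = 0 then (1 : ℝ)
        else if (i : ℕ) = 1 then x j - p
        else if (i : ℕ) = 2 then (-1) ^ ((j : ℕ) + 1 + 1) * |x j - p|
        else if (j : ℕ) = (i : ℕ) - 1 ∨ (j : ℕ) = (i : ℕ) then 1 else 0) ∧
    ∀ φ : Fin n → ℝ,
      (Matrix.of fun i j : Fin n =>
          if (i : ℕ) = 0 then (1 : ℝ)
          else if (i : ℕ) = 1 then x j - p
          else if (i : ℕ) = 2 then (-1) ^ ((j : ℕ) + 1 + 1) * |x j - p|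
          else if (j : ℕ) = (i : ℕ) - 1 ∨ (j : ℕ) = (i : ℕ) then 1 else 0).mulVec φ =
        (fun i : Fin n => if (i : ℕ) = 0 then (1 : ℝ) else 0) →
      ∀ i, 0 ≤ φ i := by
  obtain ⟨hp0, hp1⟩ := hp
  have hx01 : x ⟨0, by omega⟩ < x ⟨1, by omega⟩ := hx (by rw [Fin.lt_def]; simp)
  constructor
  · rw [Matrix.isUnit_iff_isUnit_det, isUnit_iff_ne_zero]
    intro hdet
    obtain ⟨v, hv, hmv⟩ := Matrix.exists_mulVec_eq_zero_iff.mpr hdet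
    obtain ⟨hz, hsum, hlin⟩ := moment_aux n hn x hx p hp0 hp1 0 v
      (by rw [hmv]; funext i; simp)
    apply hv
    have key : (x ⟨1, by omega⟩ - x ⟨0, by omega⟩) * v ⟨1, by omega⟩ = 0 := by
      linear_combination hlin - (x ⟨0, by omega⟩ - p) * hsum
    have hv1 : v ⟨1, by omega⟩ = 0 := by
      rcases mul_eq_zero.mp key with h' | h'
      · exact absurd h' (by linarith)
      · exact h'
    have hv0 : v ⟨0, by omega⟩ = 0 := by linarith [hsum, hv1]
    funext j
    rcases Nat.lt_or_ge (j:ℕ) 2 with hj | hj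
    · rcases j with ⟨jv, hjv⟩
      simp only [Fin.val_mk] at hj
      interval_cases jv
      · exact hv0
      · exact hv1
    · exact hz j hj
  · intro φ hφ i
    obtain ⟨hz, hsum, hlin⟩ := moment_aux n hn x hx p hp0 hp1 1 φ hφ
    have k1 : (x ⟨1, by omega⟩ - x ⟨0, by omega⟩) * φ ⟨1, by omega⟩ = p - x ⟨0, by omega⟩ := by
      linear_combination hlin - (x ⟨0, by omega⟩ - p) * hsum
    have k0 : (x ⟨1, by omega⟩ - x ⟨0, by omega⟩) * φ ⟨0, by omega⟩ = x ⟨1, by omega⟩ - p := by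
      linear_combination (x ⟨1, by omega⟩ - p) * hsum - hlin
    have h1nn : 0 ≤ φ ⟨1, by omega⟩ := by nlinarith
    have h0nn : 0 ≤ φ ⟨0, by omega⟩ := by nlinarith
    rcases Nat.lt_or_ge (i:ℕ) 2 with hi | hi
    · rcases i with ⟨iv, hiv⟩
      simp only [Fin.val_mk] at hi
      interval_cases iv
      · exact h0nn
      · exact h1nn
    · rw [hz i hi]
end

section
/- Let v1,v2,v3,v4 ∈ ℝ² form a convex quadrilateral in counterclockwise cyclic order. Then for every p ∈ ℝ², the moment system matrix M(p) is invertible. -/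
open Matrix

/-- The moment system matrix `M(p)`: rows `(1,1,1,1)`, the two coordinate rows of the
vertices, and `(d₁(p), -d₂(p), d₃(p), -d₄(p))` where `dᵢ(p) = ‖p - vᵢ‖`. -/
noncomputable def momentMatrix (v : Fin 4 → EuclideanSpace ℝ (Fin 2))
    (p : EuclideanSpace ℝ (Fin 2)) : Matrix (Fin 4) (Fin 4) ℝ :=
  Matrix.of ![fun i => 1, fun i => v i 0, fun i => v i 1,
              ![‖p - v 0‖, -‖p - v 1‖, ‖p - v 2‖, -‖p - v 3‖]]

/-- For a convex quadrilateral (counterclockwise cyclic order), the moment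
system matrix `M(p)` is invertible for every point `p` of the plane. -/
theorem momentMatrix_isUnit (v : Fin 4 → EuclideanSpace ℝ (Fin 2))
    (hccw : ConvexCCW v) (p : EuclideanSpace ℝ (Fin 2)) :
    IsUnit (momentMatrix v p) := by
  have h0 : 0 < sArea (v 0) (v 1) (v 2) := hccw 0
  have h1 : 0 < sArea (v 1) (v 2) (v 3) := hccw 1
  have h2 : 0 < sArea (v 2) (v 3) (v 0) := hccw 2
  have h3 : 0 < sArea (v 3) (v 0) (v 1) := hccw 3
  have key : (momentMatrix v p).det =
      -2 * (‖p - v 0‖ * sArea (v 1) (v 2) (v 3)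
        + ‖p - v 1‖ * sArea (v 2) (v 3) (v 0)
        + ‖p - v 2‖ * sArea (v 3) (v 0) (v 1)
        + ‖p - v 3‖ * sArea (v 0) (v 1) (v 2)) := by
    simp [momentMatrix, sArea, Matrix.det_succ_row_zero, Fin.sum_univ_succ, Fin.succAbove, Fin.succ, Fin.castSucc, Fin.castAdd, Fin.castLE]
    ring
  rw [Matrix.isUnit_iff_isUnit_det, isUnit_iff_ne_zero, key]
  have d0 := norm_nonneg (p - v 0)
  have d1 := norm_nonneg (p - v 1)
  have d2 := norm_nonneg (p - v 2)
  have d3 := norm_nonneg (p - v 3)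
  by_cases hp : p = v 0
  · have hne : v 0 ≠ v 1 := by
      intro h
      rw [h] at h0
      simp [sArea] at h0
    have hd1 : 0 < ‖p - v 1‖ := by
      rw [hp, norm_pos_iff, sub_ne_zero]; exact hne
    nlinarith [mul_pos hd1 h2, mul_nonneg d0 h1.le, mul_nonneg d2 h3.le, mul_nonneg d3 h0.le]
  · have hd0 : 0 < ‖p - v 0‖ := by rw [norm_pos_iff, sub_ne_zero]; exact hp
    nlinarith [mul_pos hd0 h1, mul_nonneg d1 h2.le, mul_nonneg d2 h3.le, mul_nonneg d3 h0.le]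
end

section
/- Let v1,v2,v3,v4 ∈ ℝ² form a convex quadrilateral in counterclockwise cyclic order and let Q be their convex hull. Then for every p ∈ Q, the unique solution φ(p) ∈ ℝ⁴ of the moment system M(p)φ = (1, p1, p2, 0) satisfies φ_i(p) ≥ 0 for all i, φ1 + φ2 + φ3 + φ4 = 1, and φ1 v1 + φ2 v2 + φ3 v3 + φ4 v4 = p. -/
open Matrix

private lemma tri_aux {E : Type*} [NormedAddCommGroup E] [NormedSpace ℝ E]
    (p u0 u1 u2 : E) (a b c : ℝ) (ha : 0 ≤ a) (hb : 0 ≤ b)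
    (hsum : a + b + c = 1) (hrep : a • u0 + b • u1 + c • u2 = p) :
    c * ‖p - u2‖ ≤ a * ‖p - u0‖ + b * ‖p - u1‖ := by
  have hc : c = 1 - a - b := by linarith
  subst hc
  have hid : (1 - a - b) • (p - u2) = a • (u0 - p) + b • (u1 - p) := by
    rw [← hrep]; module
  calc (1 - a - b) * ‖p - u2‖ ≤ ‖(1 - a - b) • (p - u2)‖ := by
        rw [norm_smul]; exact mul_le_mul_of_nonneg_right (le_abs_self _) (norm_nonneg _)
    _ = ‖a • (u0 - p) + b • (u1 - p)‖ := by rw [hid]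
    _ ≤ ‖a • (u0 - p)‖ + ‖b • (u1 - p)‖ := norm_add_le _ _
    _ = a * ‖p - u0‖ + b * ‖p - u1‖ := by
        rw [norm_smul, norm_smul, Real.norm_of_nonneg ha, Real.norm_of_nonneg hb,
          norm_sub_rev u0 p, norm_sub_rev u1 p]

private lemma cramer3 {x0 x1 x2 y0 y1 y2 a b c : ℝ}
    (hdet : (x1 - x0) * (y2 - y0) - (y1 - y0) * (x2 - x0) ≠ 0)
    (h1 : a + b + c = 0) (h2 : a * x0 + b * x1 + c * x2 = 0)
    (h3 : a * y0 + b * y1 + c * y2 = 0) : a = 0 ∧ b = 0 ∧ c = 0 := by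
  refine ⟨?_, ?_, ?_⟩
  · have key : a * ((x1 - x0) * (y2 - y0) - (y1 - y0) * (x2 - x0)) = 0 := by
      linear_combination (x1*y2 - x2*y1) * h1 + (y1 - y2) * h2 + (x2 - x1) * h3
    exact (mul_eq_zero.mp key).resolve_right hdet
  · have key : b * ((x1 - x0) * (y2 - y0) - (y1 - y0) * (x2 - x0)) = 0 := by
      linear_combination (x2*y0 - x0*y2) * h1 + (y2 - y0) * h2 + (x0 - x2) * h3
    exact (mul_eq_zero.mp key).resolve_right hdet
  · have key : c * ((x1 - x0) * (y2 - y0) - (y1 - y0) * (x2 - x0)) = 0 := by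
      linear_combination (x0*y1 - x1*y0) * h1 + (y0 - y1) * h2 + (x1 - x0) * h3
    exact (mul_eq_zero.mp key).resolve_right hdet

private lemma vec4_of_coords (u0 u1 u2 u3 q : EuclideanSpace ℝ (Fin 2)) (a b c e : ℝ)
    (hx : a * u0 0 + b * u1 0 + c * u2 0 + e * u3 0 = q 0)
    (hy : a * u0 1 + b * u1 1 + c * u2 1 + e * u3 1 = q 1) :
    a • u0 + b • u1 + c • u2 + e • u3 = q := by
  ext i
  fin_cases i <;> simp [PiLp.add_apply, PiLp.smul_apply, smul_eq_mul] <;> linarith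

private lemma coords_of_vec4 {u0 u1 u2 u3 q : EuclideanSpace ℝ (Fin 2)} {a b c e : ℝ}
    (h : a • u0 + b • u1 + c • u2 + e • u3 = q) (i : Fin 2) :
    a * u0 i + b * u1 i + c * u2 i + e * u3 i = q i := by
  have := congrArg (· i) h
  simpa [PiLp.add_apply, PiLp.smul_apply, smul_eq_mul] using this


set_option maxHeartbeats 1000000 in
/-- For `p` in the convex hull `Q` of a convex quadrilateral
(counterclockwise order), the moment system `M(p)φ = (1, p₁, p₂, 0)` has a unique
solution, and this solution is componentwise nonnegative, sums to `1`, and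
reproduces `p` as a combination of the vertices. -/
theorem moment_coordinates_props (v : Fin 4 → EuclideanSpace ℝ (Fin 2))
    (hccw : ConvexCCW v) (p : EuclideanSpace ℝ (Fin 2))
    (hp : p ∈ convexHull ℝ {v 0, v 1, v 2, v 3}) :
    (∃! φ : Fin 4 → ℝ, (momentMatrix v p).mulVec φ = ![1, p 0, p 1, 0]) ∧
    ∀ φ : Fin 4 → ℝ, (momentMatrix v p).mulVec φ = ![1, p 0, p 1, 0] →
      (∀ i, 0 ≤ φ i) ∧ φ 0 + φ 1 + φ 2 + φ 3 = 1 ∧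
      φ 0 • v 0 + φ 1 • v 1 + φ 2 • v 2 + φ 3 • v 3 = p := by
  have hS0 : 0 < sArea (v 0) (v 1) (v 2) := hccw 0
  have hS1 : 0 < sArea (v 1) (v 2) (v 3) := hccw 1
  have hS2 : 0 < sArea (v 2) (v 3) (v 0) := hccw 2
  have hS3 : 0 < sArea (v 3) (v 0) (v 1) := hccw 3
  obtain ⟨w0, hw0def⟩ : ∃ w : ℝ, w = 2 * sArea (v 1) (v 2) (v 3) := ⟨_, rfl⟩
  obtain ⟨w1, hw1def⟩ : ∃ w : ℝ, w = -(2 * sArea (v 2) (v 3) (v 0)) := ⟨_, rfl⟩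
  obtain ⟨w2, hw2def⟩ : ∃ w : ℝ, w = 2 * sArea (v 3) (v 0) (v 1) := ⟨_, rfl⟩
  obtain ⟨w3, hw3def⟩ : ∃ w : ℝ, w = -(2 * sArea (v 0) (v 1) (v 2)) := ⟨_, rfl⟩
  have hw0pos : 0 < w0 := by rw [hw0def]; linarith
  have hw1neg : w1 < 0 := by rw [hw1def]; linarith
  have hw2pos : 0 < w2 := by rw [hw2def]; linarith
  have hw3neg : w3 < 0 := by rw [hw3def]; linarith
  have ker1 : w0 + w1 + w2 + w3 = 0 := by
    rw [hw0def, hw1def, hw2def, hw3def]; simp only [sArea]; ring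
  have kerx : w0 * v 0 0 + w1 * v 1 0 + w2 * v 2 0 + w3 * v 3 0 = 0 := by
    rw [hw0def, hw1def, hw2def, hw3def]; simp only [sArea]; ring
  have kery : w0 * v 0 1 + w1 * v 1 1 + w2 * v 2 1 + w3 * v 3 1 = 0 := by
    rw [hw0def, hw1def, hw2def, hw3def]; simp only [sArea]; ring
  -- the determinant of the first three vertices
  have hdet0 : (v 1 0 - v 0 0) * (v 2 1 - v 0 1) - (v 1 1 - v 0 1) * (v 2 0 - v 0 0) ≠ 0 := by
    have h := hS0; simp only [sArea] at h
    intro hc; rw [hc] at h; norm_num at h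
  -- kernel of the affine part is spanned by w
  have hker : ∀ δ0 δ1 δ2 δ3 : ℝ, δ0 + δ1 + δ2 + δ3 = 0 →
      δ0 * v 0 0 + δ1 * v 1 0 + δ2 * v 2 0 + δ3 * v 3 0 = 0 →
      δ0 * v 0 1 + δ1 * v 1 1 + δ2 * v 2 1 + δ3 * v 3 1 = 0 →
      ∃ t : ℝ, δ0 = t * w0 ∧ δ1 = t * w1 ∧ δ2 = t * w2 ∧ δ3 = t * w3 := by
    intro δ0 δ1 δ2 δ3 hs hx hy
    have hw3ne : w3 ≠ 0 := ne_of_lt hw3neg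
    refine ⟨δ3 / w3, ?_⟩
    have ht3 : δ3 = δ3 / w3 * w3 := by field_simp
    have h1 : (δ0 - δ3 / w3 * w0) + (δ1 - δ3 / w3 * w1) + (δ2 - δ3 / w3 * w2) = 0 := by
      linear_combination hs - (δ3 / w3) * ker1 - ht3
    have h2 : (δ0 - δ3 / w3 * w0) * v 0 0 + (δ1 - δ3 / w3 * w1) * v 1 0
        + (δ2 - δ3 / w3 * w2) * v 2 0 = 0 := by
      linear_combination hx - (δ3 / w3) * kerx - v 3 0 * ht3
    have h3 : (δ0 - δ3 / w3 * w0) * v 0 1 + (δ1 - δ3 / w3 * w1) * v 1 1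
        + (δ2 - δ3 / w3 * w2) * v 2 1 = 0 := by
      linear_combination hy - (δ3 / w3) * kery - v 3 1 * ht3
    obtain ⟨ha, hb, hc⟩ := cramer3 hdet0 h1 h2 h3
    exact ⟨by linarith, by linarith, by linarith, ht3⟩
  -- positivity of D
  have hd0 := norm_nonneg (p - v 0)
  have hd1 := norm_nonneg (p - v 1)
  have hd2 := norm_nonneg (p - v 2)
  have hd3 := norm_nonneg (p - v 3)
  obtain ⟨D, hDdef⟩ : ∃ d : ℝ, d = ‖p - v 0‖ * w0 - ‖p - v 1‖ * w1 + ‖p - v 2‖ * w2 - ‖p - v 3‖ * w3 := ⟨_, rfl⟩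
  have hDpos : 0 < D := by
    have hsome : 0 < ‖p - v 0‖ ∨ 0 < ‖p - v 1‖ := by
      by_contra hcon
      push_neg at hcon
      obtain ⟨h1, h2⟩ := hcon
      have e0 : p = v 0 := by
        have : ‖p - v 0‖ = 0 := le_antisymm h1 (norm_nonneg _)
        rw [norm_eq_zero, sub_eq_zero] at this; exact this
      have e1 : p = v 1 := by
        have : ‖p - v 1‖ = 0 := le_antisymm h2 (norm_nonneg _)
        rw [norm_eq_zero, sub_eq_zero] at this; exact this
      have e01 : v 0 = v 1 := e0.symm.trans e1
      have := hS0
      rw [← e01] at this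
      simp [sArea] at this
    rw [hDdef]
    rcases hsome with h | h <;>
      linarith [mul_nonneg hd0 hw0pos.le, mul_nonneg hd1 (by linarith : (0:ℝ) ≤ -w1),
        mul_nonneg hd2 hw2pos.le, mul_nonneg hd3 (by linarith : (0:ℝ) ≤ -w3),
        mul_pos h hw0pos, mul_pos h (by linarith : (0:ℝ) < -w1)]
  -- characterization of the moment system
  have key : ∀ φ : Fin 4 → ℝ, (momentMatrix v p).mulVec φ = ![1, p 0, p 1, 0] ↔
      (φ 0 + φ 1 + φ 2 + φ 3 = 1 ∧
       φ 0 * v 0 0 + φ 1 * v 1 0 + φ 2 * v 2 0 + φ 3 * v 3 0 = p 0 ∧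
       φ 0 * v 0 1 + φ 1 * v 1 1 + φ 2 * v 2 1 + φ 3 * v 3 1 = p 1 ∧
       ‖p - v 0‖ * φ 0 - ‖p - v 1‖ * φ 1 + ‖p - v 2‖ * φ 2 - ‖p - v 3‖ * φ 3 = 0) := by
    intro φ
    constructor
    · intro h
      have h0 := congrFun h 0
      have h1 := congrFun h 1
      have h2 := congrFun h 2
      have h3 := congrFun h 3
      simp [momentMatrix, Matrix.mulVec, dotProduct, Fin.sum_univ_four] at h0 h1 h2 h3
      refine ⟨by linarith, by linarith, by linarith, by linarith⟩
    · rintro ⟨h0, h1, h2, h3⟩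
      funext i
      fin_cases i <;>
        simp [momentMatrix, Matrix.mulVec, dotProduct, Fin.sum_univ_four] <;> linarith
  -- a convex-combination representation of p
  obtain ⟨c0, c1, c2, c3, hc0, hc1, hc2, hc3, hcsum, hcrep⟩ :
      ∃ c0 c1 c2 c3 : ℝ, 0 ≤ c0 ∧ 0 ≤ c1 ∧ 0 ≤ c2 ∧ 0 ≤ c3 ∧ c0 + c1 + c2 + c3 = 1 ∧
        c0 • v 0 + c1 • v 1 + c2 • v 2 + c3 • v 3 = p := by
    rw [show ({v 0, v 1, v 2, v 3} : Set (EuclideanSpace ℝ (Fin 2)))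
        = insert (v 0) {v 1, v 2, v 3} from rfl,
      convexHull_insert ⟨v 1, by simp⟩, mem_convexJoin] at hp
    obtain ⟨x, hx, z1, hz1, hseg1⟩ := hp
    rw [show ({v 1, v 2, v 3} : Set (EuclideanSpace ℝ (Fin 2)))
        = insert (v 1) {v 2, v 3} from rfl,
      convexHull_insert ⟨v 2, by simp⟩, mem_convexJoin] at hz1
    obtain ⟨y, hy, z2, hz2, hseg2⟩ := hz1
    rw [convexHull_pair] at hz2
    simp only [Set.mem_singleton_iff] at hx hy
    subst hx; subst hy
    obtain ⟨a0, b0, ha0, hb0, hab0, hp0⟩ := hseg1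
    obtain ⟨a1, b1, ha1, hb1, hab1, hp1⟩ := hseg2
    obtain ⟨a2, b2, ha2, hb2, hab2, hp2⟩ := hz2
    refine ⟨a0, b0*a1, b0*b1*a2, b0*b1*b2, ha0, by positivity, by positivity, by positivity,
      by linear_combination hab0 + b0 * hab1 + b0*b1 * hab2, ?_⟩
    rw [← hp0, ← hp1, ← hp2]; module
  have hcx := coords_of_vec4 hcrep 0
  have hcy := coords_of_vec4 hcrep 1
  obtain ⟨Lc, hLcdef⟩ : ∃ l : ℝ, l = ‖p - v 0‖ * c0 - ‖p - v 1‖ * c1 + ‖p - v 2‖ * c2 - ‖p - v 3‖ * c3 := ⟨_, rfl⟩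
  -- the candidate solution
  obtain ⟨ts, htsdef⟩ : ∃ t : ℝ, t = -Lc / D := ⟨_, rfl⟩
  have hDne : D ≠ 0 := ne_of_gt hDpos
  have hts : ts * D = -Lc := by rw [htsdef]; field_simp
  have hφ1 : (c0 + ts*w0) + (c1 + ts*w1) + (c2 + ts*w2) + (c3 + ts*w3) = 1 := by
    linear_combination hcsum + ts * ker1
  have hφx : (c0 + ts*w0) * v 0 0 + (c1 + ts*w1) * v 1 0 + (c2 + ts*w2) * v 2 0
      + (c3 + ts*w3) * v 3 0 = p 0 := by
    linear_combination hcx + ts * kerx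
  have hφy : (c0 + ts*w0) * v 0 1 + (c1 + ts*w1) * v 1 1 + (c2 + ts*w2) * v 2 1
      + (c3 + ts*w3) * v 3 1 = p 1 := by
    linear_combination hcy + ts * kery
  have hφL : ‖p - v 0‖ * (c0 + ts*w0) - ‖p - v 1‖ * (c1 + ts*w1)
      + ‖p - v 2‖ * (c2 + ts*w2) - ‖p - v 3‖ * (c3 + ts*w3) = 0 := by
    linear_combination hts - hLcdef - ts * hDdef
  have hφval : (momentMatrix v p).mulVec ![c0 + ts*w0, c1 + ts*w1, c2 + ts*w2, c3 + ts*w3]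
      = ![1, p 0, p 1, 0] := by
    rw [key]
    refine ⟨?_, ?_, ?_, ?_⟩ <;>
      simp only [Matrix.cons_val_zero, Matrix.cons_val_one, Matrix.head_cons,
        Matrix.cons_val_two, Matrix.cons_val_three, Matrix.tail_cons]
    · exact hφ1
    · exact hφx
    · exact hφy
    · exact hφL
  -- decompose an arbitrary solution relative to c
  have hdecomp : ∀ φ : Fin 4 → ℝ, (momentMatrix v p).mulVec φ = ![1, p 0, p 1, 0] →
      ∃ t : ℝ, (φ 0 = c0 + t * w0 ∧ φ 1 = c1 + t * w1 ∧ φ 2 = c2 + t * w2 ∧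
        φ 3 = c3 + t * w3) ∧ Lc + t * D = 0 := by
    intro φ hφ
    obtain ⟨hφs, hφx', hφy', hφL'⟩ := (key φ).mp hφ
    obtain ⟨t, h0, h1, h2, h3⟩ := hker (φ 0 - c0) (φ 1 - c1) (φ 2 - c2) (φ 3 - c3)
      (by linarith) (by linear_combination hφx' - hcx) (by linear_combination hφy' - hcy)
    refine ⟨t, ⟨by linarith, by linarith, by linarith, by linarith⟩, ?_⟩
    linear_combination hφL' - ‖p - v 0‖ * h0 + ‖p - v 1‖ * h1 - ‖p - v 2‖ * h2
      + ‖p - v 3‖ * h3 + hLcdef + t * hDdef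
  constructor
  · -- existence and uniqueness
    refine ⟨![c0 + ts*w0, c1 + ts*w1, c2 + ts*w2, c3 + ts*w3], hφval, ?_⟩
    intro φ hφ
    obtain ⟨t, ⟨h0, h1, h2, h3⟩, hLt⟩ := hdecomp φ hφ
    have htts : t = ts := by
      have : (t - ts) * D = 0 := by linear_combination hLt - hts
      rcases mul_eq_zero.mp this with h | h
      · linarith
      · exact absurd h hDne
    subst htts
    funext i
    fin_cases i
    · simpa using h0
    · simpa using h1
    · simpa using h2
    · simpa using h3
  · -- properties of any solution
    intro φ hφ
    obtain ⟨t, ⟨h0, h1, h2, h3⟩, hLt⟩ := hdecomp φ hφ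
    obtain ⟨hφs, hφx', hφy', hφL'⟩ := (key φ).mp hφ
    -- upper barrier
    have hw1ne : w1 ≠ 0 := ne_of_lt hw1neg
    have hw3ne : w3 ≠ 0 := ne_of_lt hw3neg
    have hw0ne : w0 ≠ 0 := ne_of_gt hw0pos
    have hw2ne : w2 ≠ 0 := ne_of_gt hw2pos
    obtain ⟨tup, htupdef⟩ : ∃ t : ℝ, t = min (c1 / -w1) (c3 / -w3) := ⟨_, rfl⟩
    have htup0 : 0 ≤ tup := by
      rw [htupdef]
      exact le_min (div_nonneg hc1 (by linarith)) (div_nonneg hc3 (by linarith))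
    have hα0 : 0 ≤ c0 + tup * w0 := by linarith [mul_nonneg htup0 hw0pos.le]
    have hα2 : 0 ≤ c2 + tup * w2 := by linarith [mul_nonneg htup0 hw2pos.le]
    have hα1 : 0 ≤ c1 + tup * w1 := by
      have h : tup ≤ c1 / -w1 := by rw [htupdef]; exact min_le_left _ _
      have h' : tup * -w1 ≤ c1 / -w1 * -w1 :=
        mul_le_mul_of_nonneg_right h (by linarith)
      rw [div_mul_cancel₀ _ (by linarith : -w1 ≠ 0)] at h'
      linarith
    have hα3 : 0 ≤ c3 + tup * w3 := by
      have h : tup ≤ c3 / -w3 := by rw [htupdef]; exact min_le_right _ _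
      have h' : tup * -w3 ≤ c3 / -w3 * -w3 :=
        mul_le_mul_of_nonneg_right h (by linarith)
      rw [div_mul_cancel₀ _ (by linarith : -w3 ≠ 0)] at h'
      linarith
    have hαzero : c1 + tup * w1 = 0 ∨ c3 + tup * w3 = 0 := by
      rcases min_choice (c1 / -w1) (c3 / -w3) with h | h
      · left; rw [htupdef, h, div_neg, neg_mul, div_mul_cancel₀ _ hw1ne]; ring
      · right; rw [htupdef, h, div_neg, neg_mul, div_mul_cancel₀ _ hw3ne]; ring
    have hαsum : (c0 + tup*w0) + (c1 + tup*w1) + (c2 + tup*w2) + (c3 + tup*w3) = 1 := by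
      linear_combination hcsum + tup * ker1
    have hαrep : (c0 + tup*w0) • v 0 + (c1 + tup*w1) • v 1 + (c2 + tup*w2) • v 2
        + (c3 + tup*w3) • v 3 = p := by
      refine vec4_of_coords _ _ _ _ _ _ _ _ _ ?_ ?_
      · linear_combination hcx + tup * kerx
      · linear_combination hcy + tup * kery
    have hLA : 0 ≤ Lc + tup * D := by
      rw [hLcdef, hDdef]
      rcases hαzero with h | h
      · have hrep' : (c0 + tup*w0) • v 0 + (c2 + tup*w2) • v 2 + (c3 + tup*w3) • v 3 = p := by
          rw [← hαrep, h, zero_smul]; module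
        have htri := tri_aux p (v 0) (v 2) (v 3) _ _ _ hα0 hα2 (by linarith) hrep'
        have hzero : ‖p - v 1‖ * (c1 + tup * w1) = 0 := by rw [h, mul_zero]
        linarith [htri, hzero]
      · have hrep' : (c0 + tup*w0) • v 0 + (c2 + tup*w2) • v 2 + (c1 + tup*w1) • v 1 = p := by
          rw [← hαrep, h, zero_smul]; module
        have htri := tri_aux p (v 0) (v 2) (v 1) _ _ _ hα0 hα2 (by linarith) hrep'
        have hzero : ‖p - v 3‖ * (c3 + tup * w3) = 0 := by rw [h, mul_zero]
        linarith [htri, hzero]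
    -- lower barrier
    obtain ⟨tdn, htdndef⟩ : ∃ t : ℝ, t = min (c0 / w0) (c2 / w2) := ⟨_, rfl⟩
    have htdn0 : 0 ≤ tdn := by
      rw [htdndef]
      exact le_min (div_nonneg hc0 hw0pos.le) (div_nonneg hc2 hw2pos.le)
    have hβ1 : 0 ≤ c1 - tdn * w1 := by linarith [mul_nonneg htdn0 (show (0:ℝ) ≤ -w1 by linarith)]
    have hβ3 : 0 ≤ c3 - tdn * w3 := by linarith [mul_nonneg htdn0 (show (0:ℝ) ≤ -w3 by linarith)]
    have hβ0 : 0 ≤ c0 - tdn * w0 := by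
      have h : tdn ≤ c0 / w0 := by rw [htdndef]; exact min_le_left _ _
      have h' : tdn * w0 ≤ c0 / w0 * w0 := mul_le_mul_of_nonneg_right h hw0pos.le
      rw [div_mul_cancel₀ _ hw0ne] at h'
      linarith
    have hβ2 : 0 ≤ c2 - tdn * w2 := by
      have h : tdn ≤ c2 / w2 := by rw [htdndef]; exact min_le_right _ _
      have h' : tdn * w2 ≤ c2 / w2 * w2 := mul_le_mul_of_nonneg_right h hw2pos.le
      rw [div_mul_cancel₀ _ hw2ne] at h'
      linarith
    have hβzero : c0 - tdn * w0 = 0 ∨ c2 - tdn * w2 = 0 := by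
      rcases min_choice (c0 / w0) (c2 / w2) with h | h
      · left; rw [htdndef, h, div_mul_cancel₀ _ hw0ne]; ring
      · right; rw [htdndef, h, div_mul_cancel₀ _ hw2ne]; ring
    have hβsum : (c0 - tdn*w0) + (c1 - tdn*w1) + (c2 - tdn*w2) + (c3 - tdn*w3) = 1 := by
      linear_combination hcsum - tdn * ker1
    have hβrep : (c0 - tdn*w0) • v 0 + (c1 - tdn*w1) • v 1 + (c2 - tdn*w2) • v 2
        + (c3 - tdn*w3) • v 3 = p := by
      refine vec4_of_coords _ _ _ _ _ _ _ _ _ ?_ ?_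
      · linear_combination hcx - tdn * kerx
      · linear_combination hcy - tdn * kery
    have hLB : Lc - tdn * D ≤ 0 := by
      rw [hLcdef, hDdef]
      rcases hβzero with h | h
      · have hrep' : (c1 - tdn*w1) • v 1 + (c3 - tdn*w3) • v 3 + (c2 - tdn*w2) • v 2 = p := by
          rw [← hβrep, h, zero_smul]; module
        have htri := tri_aux p (v 1) (v 3) (v 2) _ _ _ hβ1 hβ3 (by linarith) hrep'
        have hzero : ‖p - v 0‖ * (c0 - tdn * w0) = 0 := by rw [h, mul_zero]
        linarith [htri, hzero]
      · have hrep' : (c1 - tdn*w1) • v 1 + (c3 - tdn*w3) • v 3 + (c0 - tdn*w0) • v 0 = p := by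
          rw [← hβrep, h, zero_smul]; module
        have htri := tri_aux p (v 1) (v 3) (v 0) _ _ _ hβ1 hβ3 (by linarith) hrep'
        have hzero : ‖p - v 2‖ * (c2 - tdn * w2) = 0 := by rw [h, mul_zero]
        linarith [htri, hzero]
    -- bounds on t
    have htle : t ≤ tup := by
      have h1 : 0 ≤ (tup - t) * D := by linarith [hLA, hLt]
      by_contra hcon
      push_neg at hcon
      have : (tup - t) * D < 0 := mul_neg_of_neg_of_pos (by linarith) hDpos
      linarith
    have htge : -tdn ≤ t := by
      have h1 : 0 ≤ (t + tdn) * D := by linarith [hLB, hLt]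
      by_contra hcon
      push_neg at hcon
      have : (t + tdn) * D < 0 := mul_neg_of_neg_of_pos (by linarith) hDpos
      linarith
    -- nonnegativity
    have hn0 : 0 ≤ φ 0 := by
      linarith [h0, hβ0, mul_nonneg (show (0:ℝ) ≤ t + tdn by linarith) hw0pos.le]
    have hn2 : 0 ≤ φ 2 := by
      linarith [h2, hβ2, mul_nonneg (show (0:ℝ) ≤ t + tdn by linarith) hw2pos.le]
    have hn1 : 0 ≤ φ 1 := by
      linarith [h1, hα1, mul_nonneg (show (0:ℝ) ≤ tup - t by linarith)
        (show (0:ℝ) ≤ -w1 by linarith)]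
    have hn3 : 0 ≤ φ 3 := by
      linarith [h3, hα3, mul_nonneg (show (0:ℝ) ≤ tup - t by linarith)
        (show (0:ℝ) ≤ -w3 by linarith)]
    refine ⟨?_, hφs, ?_⟩
    · intro i
      fin_cases i
      · exact hn0
      · exact hn1
      · exact hn2
      · exact hn3
    · exact vec4_of_coords _ _ _ _ _ _ _ _ _ hφx' hφy'
end

section
/- Let v1,v2,v3,v4 ∈ ℝ² form a convex quadrilateral in counterclockwise cyclic order. If p = (1−α)v1 + α v2 with α ∈ [0,1], then the vector φ = (1−α, α, 0, 0) satisfies the moment system M(p)φ = (1, p1, p2, 0); in particular, since M(p) is invertible, φ is its unique solution, so the moment coordinates are affine along the edge from v1 to v2. -/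
open Matrix

lemma sArea_cycle (a b c : EuclideanSpace ℝ (Fin 2)) : sArea a b c = sArea b c a := by
  simp [sArea]; ring


lemma det_fin_four' (A : Matrix (Fin 4) (Fin 4) ℝ) : A.det =
    A 0 0 * (A 1 1 * (A 2 2 * A 3 3 - A 2 3 * A 3 2) - A 1 2 * (A 2 1 * A 3 3 - A 2 3 * A 3 1)
      + A 1 3 * (A 2 1 * A 3 2 - A 2 2 * A 3 1))
  - A 0 1 * (A 1 0 * (A 2 2 * A 3 3 - A 2 3 * A 3 2) - A 1 2 * (A 2 0 * A 3 3 - A 2 3 * A 3 0)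
      + A 1 3 * (A 2 0 * A 3 2 - A 2 2 * A 3 0))
  + A 0 2 * (A 1 0 * (A 2 1 * A 3 3 - A 2 3 * A 3 1) - A 1 1 * (A 2 0 * A 3 3 - A 2 3 * A 3 0)
      + A 1 3 * (A 2 0 * A 3 1 - A 2 1 * A 3 0))
  - A 0 3 * (A 1 0 * (A 2 1 * A 3 2 - A 2 2 * A 3 1) - A 1 1 * (A 2 0 * A 3 2 - A 2 2 * A 3 0)
      + A 1 2 * (A 2 0 * A 3 1 - A 2 1 * A 3 0)) := by
  rw [Matrix.det_succ_row_zero]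
  simp [Fin.sum_univ_succ, Matrix.det_fin_three, Fin.succAbove,
    show ((2:Fin 3).succ) = (3:Fin 4) from rfl, show Fin.castSucc (2:Fin 3) = (2:Fin 4) from rfl]
  ring

/-- If `p = (1-α)v₁ + αv₂` with `α ∈ [0,1]` lies on the edge from `v₁` to
`v₂` of a convex quadrilateral (counterclockwise order), then `φ = (1-α, α, 0, 0)`
solves the moment system `M(p)φ = (1, p₁, p₂, 0)`, and it is the unique solution. -/
theorem moment_coordinates_edge (v : Fin 4 → EuclideanSpace ℝ (Fin 2))
    (hccw : ConvexCCW v) (α : ℝ) (hα : α ∈ Set.Icc (0 : ℝ) 1)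
    (p : EuclideanSpace ℝ (Fin 2)) (hp : p = (1 - α) • v 0 + α • v 1) :
    (momentMatrix v p).mulVec ![1 - α, α, 0, 0] = ![1, p 0, p 1, 0] ∧
    ∀ φ : Fin 4 → ℝ, (momentMatrix v p).mulVec φ = ![1, p 0, p 1, 0] →
      φ = ![1 - α, α, 0, 0] := by
  obtain ⟨hα0, hα1⟩ := hα
  have hp0 : p 0 = (1 - α) * v 0 0 + α * v 1 0 := by
    rw [hp]; simp [PiLp.add_apply, PiLp.smul_apply, smul_eq_mul]
  have hp1 : p 1 = (1 - α) * v 0 1 + α * v 1 1 := by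
    rw [hp]; simp [PiLp.add_apply, PiLp.smul_apply, smul_eq_mul]
  have hd0 : ‖p - v 0‖ = α * ‖v 1 - v 0‖ := by
    have h : p - v 0 = α • (v 1 - v 0) := by rw [hp]; module
    rw [h, norm_smul, Real.norm_eq_abs, abs_of_nonneg hα0]
  have hd1 : ‖p - v 1‖ = (1 - α) * ‖v 1 - v 0‖ := by
    have h : p - v 1 = (1 - α) • (v 0 - v 1) := by rw [hp]; module
    rw [h, norm_smul, Real.norm_eq_abs, abs_of_nonneg (by linarith), norm_sub_rev]
  have hmain : (momentMatrix v p).mulVec ![1 - α, α, 0, 0] = ![1, p 0, p 1, 0] := by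
    funext i
    fin_cases i <;>
      simp [momentMatrix, Matrix.mulVec, dotProduct, Fin.sum_univ_four, hp0, hp1,
        hd0, hd1] <;> ring
  refine ⟨hmain, ?_⟩
  -- positivity of areas
  have hS0 := hccw 0
  have hS1 := hccw 1
  have hS2 := hccw 2
  have hS3 := hccw 3
  simp only [show (0:Fin 4)+1 = 1 from rfl, show (0:Fin 4)+2 = 2 from rfl,
    show (1:Fin 4)+1 = 2 from rfl, show (1:Fin 4)+2 = 3 from rfl,
    show (2:Fin 4)+1 = 3 from rfl, show (2:Fin 4)+2 = 0 from rfl,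
    show (3:Fin 4)+1 = 0 from rfl, show (3:Fin 4)+2 = 1 from rfl] at hS0 hS1 hS2 hS3
  have hA : 0 < sArea (v 1) (v 2) (v 3) := hS1
  have hB : 0 < sArea (v 0) (v 2) (v 3) := by rw [sArea_cycle]; exact hS2
  have hC : 0 < sArea (v 0) (v 1) (v 3) := by rw [sArea_cycle, sArea_cycle]; exact hS3
  have hD : 0 < sArea (v 0) (v 1) (v 2) := hS0
  have hd2 : 0 < ‖p - v 2‖ := by
    rw [norm_pos_iff, sub_ne_zero]
    intro h
    have h0 : v 2 0 = p 0 := by rw [h]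
    have h1 : v 2 1 = p 1 := by rw [h]
    simp only [sArea] at hD
    rw [h0, h1, hp0, hp1] at hD
    nlinarith [hD]
  have hd3 : 0 < ‖p - v 3‖ := by
    rw [norm_pos_iff, sub_ne_zero]
    intro h
    have h0 : v 3 0 = p 0 := by rw [h]
    have h1 : v 3 1 = p 1 := by rw [h]
    simp only [sArea] at hC
    rw [h0, h1, hp0, hp1] at hC
    nlinarith [hC]
  have hdet_eq : (momentMatrix v p).det =
      -(‖p - v 0‖ * (2 * sArea (v 1) (v 2) (v 3)) + ‖p - v 1‖ * (2 * sArea (v 0) (v 2) (v 3))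
        + ‖p - v 2‖ * (2 * sArea (v 0) (v 1) (v 3))
        + ‖p - v 3‖ * (2 * sArea (v 0) (v 1) (v 2))) := by
    rw [det_fin_four']
    simp [momentMatrix, sArea]
    ring
  have hdet : (momentMatrix v p).det ≠ 0 := by
    have hlt : (momentMatrix v p).det < 0 := by
      rw [hdet_eq]
      nlinarith [mul_nonneg (norm_nonneg (p - v 0)) hA.le,
        mul_nonneg (norm_nonneg (p - v 1)) hB.le, mul_pos hd2 hC, mul_pos hd3 hD]
    exact hlt.ne
  intro φ hφ
  have hinj : Function.Injective (momentMatrix v p).mulVec :=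
    Matrix.mulVec_injective_iff_isUnit.2 ((Matrix.isUnit_iff_isUnit_det _).2 hdet.isUnit)
  exact hinj (hφ.trans hmain.symm)
end

section
/- Let v1,v2,v3,v4 ∈ ℝ² form a convex quadrilateral in counterclockwise cyclic order. Then for each j ∈ {1,2,3,4}, the unique solution of the moment system M(v_j)φ = (1, v_j¹, v_j², 0) is the j-th standard basis vector of ℝ⁴, i.e. the moment coordinates satisfy the Kronecker-delta property φ_i(v_j) = δ_{ij}. -/
open Matrix

lemma momentMatrix_det (v : Fin 4 → EuclideanSpace ℝ (Fin 2)) (p : EuclideanSpace ℝ (Fin 2)) :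
    (momentMatrix v p).det = -2*(‖p - v 0‖ * sArea (v 1) (v 2) (v 3)
      + ‖p - v 1‖ * sArea (v 2) (v 3) (v 0)
      + ‖p - v 2‖ * sArea (v 3) (v 0) (v 1)
      + ‖p - v 3‖ * sArea (v 0) (v 1) (v 2)) := by
  simp [momentMatrix, Matrix.det_succ_row_zero, Fin.sum_univ_succ, sArea,
    show ((2:Fin 4).succAbove 2 : Fin 4) = 3 by decide, show ((1:Fin 4).succAbove 2 : Fin 4) = 3 by decide,
    show ((3:Fin 4).succAbove 2 : Fin 4) = 2 by decide,
    show (Fin.castSucc (2:Fin 3) : Fin 4) = 2 from rfl, show (Fin.succ (2:Fin 3) : Fin 4) = 3 from rfl]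
  ring

lemma sArea_self_left (a c : EuclideanSpace ℝ (Fin 2)) : sArea a a c = 0 := by
  simp [sArea]

lemma sArea_self (a b : EuclideanSpace ℝ (Fin 2)) : sArea a b a = 0 := by
  simp [sArea]

lemma vertices_ne {v : Fin 4 → EuclideanSpace ℝ (Fin 2)} (hccw : ConvexCCW v)
    {i k : Fin 4} (h : i ≠ k) : v i ≠ v k := by
  have h1 : ∀ i : Fin 4, v i ≠ v (i + 1) := by
    intro i he
    have := hccw i
    rw [← he, sArea_self_left] at this
    exact lt_irrefl 0 this
  have h2 : ∀ i : Fin 4, v i ≠ v (i + 2) := by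
    intro i he
    have := hccw i
    rw [← he, sArea_self] at this
    exact lt_irrefl 0 this
  intro he
  have hcase : ∀ i k : Fin 4, i ≠ k → (k = i + 1 ∨ k = i + 2 ∨ i = k + 1) := by decide
  rcases hcase i k h with h' | h' | h'
  · exact h1 i (by rw [← h']; exact he)
  · exact h2 i (by rw [← h']; exact he)
  · exact h1 k (by rw [← h']; exact he.symm)

lemma momentMatrix_det_ne {v : Fin 4 → EuclideanSpace ℝ (Fin 2)} (hccw : ConvexCCW v)
    (j : Fin 4) : (momentMatrix v (v j)).det ≠ 0 := by
  have npos : ∀ i : Fin 4, i ≠ j → 0 < ‖v j - v i‖ := fun i hi => by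
    rw [norm_pos_iff, sub_ne_zero]
    exact vertices_ne hccw (Ne.symm hi)
  have nn : ∀ i : Fin 4, 0 ≤ ‖v j - v i‖ := fun i => norm_nonneg _
  have S0 : 0 < sArea (v 0) (v 1) (v 2) := by simpa using hccw 0
  have S1 : 0 < sArea (v 1) (v 2) (v 3) := by simpa using hccw 1
  have S2 : 0 < sArea (v 2) (v 3) (v 0) := by simpa using hccw 2
  have S3 : 0 < sArea (v 3) (v 0) (v 1) := by simpa using hccw 3
  rw [momentMatrix_det]
  fin_cases j
  · nlinarith [npos 1 (by decide), npos 2 (by decide), npos 3 (by decide), nn 0,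
      mul_pos (npos 1 (by decide)) S2, mul_nonneg (nn 0) S1.le,
      mul_pos (npos 2 (by decide)) S3, mul_pos (npos 3 (by decide)) S0]
  · nlinarith [nn 1, mul_pos (npos 0 (by decide)) S1, mul_nonneg (nn 1) S2.le,
      mul_pos (npos 2 (by decide)) S3, mul_pos (npos 3 (by decide)) S0]
  · nlinarith [nn 2, mul_pos (npos 0 (by decide)) S1, mul_pos (npos 1 (by decide)) S2,
      mul_nonneg (nn 2) S3.le, mul_pos (npos 3 (by decide)) S0]
  · nlinarith [nn 3, mul_pos (npos 0 (by decide)) S1, mul_pos (npos 1 (by decide)) S2,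
      mul_pos (npos 2 (by decide)) S3, mul_nonneg (nn 3) S0.le]

/-- At each vertex `vⱼ` of a convex quadrilateral (counterclockwise
order), the unique solution of the moment system `M(vⱼ)φ = (1, vⱼ¹, vⱼ², 0)` is the
`j`-th standard basis vector: the moment coordinates satisfy the Kronecker-delta
property. -/
theorem moment_coordinates_kronecker (v : Fin 4 → EuclideanSpace ℝ (Fin 2))
    (hccw : ConvexCCW v) (j : Fin 4) :
    (momentMatrix v (v j)).mulVec (Pi.single j 1) = ![1, v j 0, v j 1, 0] ∧
    ∀ φ : Fin 4 → ℝ, (momentMatrix v (v j)).mulVec φ = ![1, v j 0, v j 1, 0] →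
      φ = Pi.single j 1 := by
  have h1 : (momentMatrix v (v j)).mulVec (Pi.single j 1) = ![1, v j 0, v j 1, 0] := by
    rw [Matrix.mulVec_single]
    funext i
    fin_cases j <;> fin_cases i <;> simp [momentMatrix]
  refine ⟨h1, fun φ hφ => ?_⟩
  have hu : IsUnit (momentMatrix v (v j)) :=
    (Matrix.isUnit_iff_isUnit_det _).mpr (momentMatrix_det_ne hccw j).isUnit
  exact Matrix.mulVec_injective_iff_isUnit.mpr hu (hφ.trans h1.symm)
end

section
/- Let x1 = 0, x3 = 1, x2 ∈ (0,1) and x ∈ [0,1]. Then the 3×3 matrix with rows (1, 1, 1), (x1 − x, x2 − x, x3 − x) and (|x1 − x|, −|x2 − x|, |x3 − x|) is invertible, and the unique solution φ ∈ ℝ³ of the linear system with right-hand side (1, 0, 0) is componentwise nonnegative. -/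
open Matrix

/-- For nodes `x₁ = 0 < x₂ < x₃ = 1` and `x ∈ [0,1]`, the 3×3 moment
matrix with rows `(1,1,1)`, `(x₁-x, x₂-x, x₃-x)`, `(|x₁-x|, -|x₂-x|, |x₃-x|)` is
invertible and the unique solution of the system with right-hand side `(1,0,0)` is
componentwise nonnegative. -/
theorem moment_1d_three_nodes (x2 x : ℝ) (hx2 : x2 ∈ Set.Ioo (0 : ℝ) 1)
    (hx : x ∈ Set.Icc (0 : ℝ) 1) :
    IsUnit (!![(1 : ℝ), 1, 1;
               0 - x, x2 - x, 1 - x;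
               |0 - x|, -|x2 - x|, |1 - x|]) ∧
    ∀ φ : Fin 3 → ℝ,
      (!![(1 : ℝ), 1, 1;
          0 - x, x2 - x, 1 - x;
          |0 - x|, -|x2 - x|, |1 - x|]).mulVec φ = ![1, 0, 0] →
      ∀ i, 0 ≤ φ i := by
  obtain ⟨h2, h3⟩ := hx2
  obtain ⟨h0, h1⟩ := hx
  have hax : |0 - x| = x := by rw [zero_sub, abs_neg, abs_of_nonneg h0]
  have ha1 : |1 - x| = 1 - x := abs_of_nonneg (by linarith)
  constructor
  · rw [Matrix.isUnit_iff_isUnit_det, isUnit_iff_ne_zero]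
    apply ne_of_gt
    rw [Matrix.det_fin_three]
    simp only [Matrix.cons_val', Matrix.cons_val_zero, Matrix.cons_val_one, Matrix.head_cons,
      Matrix.empty_val', Matrix.cons_val_fin_one, Matrix.head_fin_const, Matrix.cons_val_two,
      Matrix.tail_cons, Matrix.of_apply]
    rw [hax, ha1]
    rcases le_total x x2 with h | h
    · rw [abs_of_nonneg (by linarith)]; nlinarith
    · rw [abs_of_nonpos (by linarith)]; nlinarith
  · intro φ hφ
    have e0 := congrFun hφ 0
    have e1 := congrFun hφ 1
    have e2 := congrFun hφ 2
    simp only [Matrix.mulVec, dotProduct, Fin.sum_univ_three, Matrix.cons_val',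
      Matrix.cons_val_zero, Matrix.cons_val_one, Matrix.head_cons, Matrix.empty_val',
      Matrix.cons_val_fin_one, Matrix.cons_val_two, Matrix.tail_cons, Matrix.of_apply,
      Matrix.head_fin_const] at e0 e1 e2
    rw [hax] at e2
    rw [ha1] at e2
    rcases le_total x x2 with h | h
    · rw [abs_of_nonneg (by linarith)] at e2
      -- from e1 + e2 : 2(1-x) φ2 = 0, and x < 1
      have hx1 : x < 1 := lt_of_le_of_lt h h3
      have hp2 : φ 2 = 0 := by
        have : (1 - x) * φ 2 = 0 := by linarith
        rcases mul_eq_zero.mp this with h' | h'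
        · linarith
        · exact h'
      rw [hp2] at e1 e2
      -- e2 : x * φ 0 - (x2 - x) * φ 1 = 0, e0 : φ 0 + φ 1 + φ 2 = 1
      have key : x2 * φ 1 = x := by nlinarith
      have n1 : 0 ≤ φ 1 := by nlinarith
      have n0 : 0 ≤ φ 0 := by nlinarith
      intro i
      fin_cases i
      · exact n0
      · exact n1
      · exact le_of_eq hp2.symm
    · rw [abs_of_nonpos (by linarith)] at e2
      have hx0 : 0 < x := lt_of_lt_of_le h2 h
      have hp0 : φ 0 = 0 := by
        have : x * φ 0 = 0 := by linarith
        rcases mul_eq_zero.mp this with h' | h'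
        · linarith
        · exact h'
      rw [hp0] at e1 e2
      have key : (1 - x2) * φ 2 = x - x2 := by nlinarith
      have n2 : 0 ≤ φ 2 := by nlinarith
      have n1 : 0 ≤ φ 1 := by nlinarith
      intro i
      fin_cases i
      · exact le_of_eq hp0.symm
      · exact n1
      · exact n2
end

section
/- Let v1 = (−1,−1), v2 = (1,−1), v3 = (1,1), v4 = (−1,1) be the vertices of the biunit square and let p = (x,y) with x, y ∈ (−1,1). Then the unique solution of the 4×4 linear system whose first two rows are the coordinates of (v1,v2,v3,v4), whose third row is (1,1,1,1), whose fourth row is (ρ1(p), −ρ2(p), ρ3(p), −ρ4(p)), and whose right-hand side is (x, y, 1, 0), is the vector of bilinear shape functions ((1−x)(1−y)/4, (1+x)(1−y)/4, (1+x)(1+y)/4, (1−x)(1+y)/4). -/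
open Matrix

/-- `hdist v i p`: Euclidean distance from `p` to the line through `v i` and `v (i+1)`. -/
noncomputable def hdist (v : Fin 4 → EuclideanSpace ℝ (Fin 2)) (i : Fin 4)
    (p : EuclideanSpace ℝ (Fin 2)) : ℝ :=
  Metric.infDist p (affineSpan ℝ {v i, v (i + 1)} : Set (EuclideanSpace ℝ (Fin 2)))

/-- `ρᵢ(p) = l_{i,i-1} l_{i,i+1} h_{i-1}(p) h_i(p)`. -/
noncomputable def rho (v : Fin 4 → EuclideanSpace ℝ (Fin 2)) (i : Fin 4)
    (p : EuclideanSpace ℝ (Fin 2)) : ℝ :=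
  ‖v i - v (i - 1)‖ * ‖v i - v (i + 1)‖ * hdist v (i - 1) p * hdist v i p

/-- Wachspress weight `wᵢ(p) = S(v_{i-1},v_i,v_{i+1}) / (S(p,v_{i-1},v_i) S(p,v_i,v_{i+1}))`. -/
noncomputable def wWach (v : Fin 4 → EuclideanSpace ℝ (Fin 2)) (i : Fin 4)
    (p : EuclideanSpace ℝ (Fin 2)) : ℝ :=
  sArea (v (i - 1)) (v i) (v (i + 1)) /
    (sArea p (v (i - 1)) (v i) * sArea p (v i) (v (i + 1)))

/-- Wachspress coordinate `φᵢ(p) = wᵢ(p) / (w₁(p)+w₂(p)+w₃(p)+w₄(p))`. -/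
noncomputable def wach (v : Fin 4 → EuclideanSpace ℝ (Fin 2)) (i : Fin 4)
    (p : EuclideanSpace ℝ (Fin 2)) : ℝ :=
  wWach v i p / (wWach v 0 p + wWach v 1 p + wWach v 2 p + wWach v 3 p)

/-- The vertices of the biunit square `[-1,1]²`. -/
noncomputable def biunitSquare : Fin 4 → EuclideanSpace ℝ (Fin 2) :=
  ![!₂[-1, -1], !₂[1, -1], !₂[1, 1], !₂[-1, 1]]
section Helpers

lemma coord_le_dist (p q : EuclideanSpace ℝ (Fin 2)) (j : Fin 2) :
    |p j - q j| ≤ dist p q := by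
  rw [EuclideanSpace.dist_eq, ← Real.sqrt_sq_eq_abs]
  apply Real.sqrt_le_sqrt
  have h := Finset.single_le_sum (f := fun i => dist (p i) (q i) ^ 2)
    (fun i _ => sq_nonneg _) (Finset.mem_univ j)
  simpa [Real.dist_eq, sq_abs] using h

lemma infDist_axis (j k : Fin 2) (a b p : EuclideanSpace ℝ (Fin 2)) (c : ℝ)
    (hjk : j ≠ k) (haj : a j = c) (hbj : b j = c) (hk : a k ≠ b k) :
    Metric.infDist p (affineSpan ℝ {a, b} : Set (EuclideanSpace ℝ (Fin 2))) = |p j - c| := by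
  apply le_antisymm
  · set t : ℝ := (p k - a k) / (b k - a k) with ht
    have hq : AffineMap.lineMap a b t ∈ (affineSpan ℝ {a, b} : Set (EuclideanSpace ℝ (Fin 2))) :=
      AffineMap.lineMap_mem_affineSpan_pair t a b
    refine le_trans (Metric.infDist_le_dist_of_mem hq) (le_of_eq ?_)
    have hcoord : ∀ i : Fin 2, (AffineMap.lineMap a b t : _ → _) i = a i + t * (b i - a i) := by
      intro i
      simp [AffineMap.lineMap_apply]
      ring
    have hkc : (AffineMap.lineMap a b t : _ → _) k = p k := by
      rw [hcoord k, ht]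
      field_simp
      ring
    have hjc : (AffineMap.lineMap a b t : _ → _) j = c := by
      rw [hcoord j, haj, hbj]; ring
    rw [EuclideanSpace.dist_eq]
    have huniv : (Finset.univ : Finset (Fin 2)) = {j, k} := by
      fin_cases j <;> fin_cases k <;> simp_all <;> decide
    rw [huniv, Finset.sum_insert (by simpa using hjk), Finset.sum_singleton, hkc, hjc]
    simp [Real.dist_eq, Real.sqrt_sq_eq_abs]
  · by_contra h
    push_neg at h
    obtain ⟨q, hq, hdq⟩ := (Metric.infDist_lt_iff ⟨a, left_mem_affineSpan_pair ℝ a b⟩).mp h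
    have hqj : q j = c := by
      have hmem : (q - a) +ᵥ a ∈ line[ℝ, a, b] := by simpa using hq
      obtain ⟨r, hr⟩ := (vadd_left_mem_affineSpan_pair (k := ℝ)).mp hmem
      have h1 : q j - a j = r * (b j - a j) := by
        have := congrArg (fun v : EuclideanSpace ℝ (Fin 2) => v j) hr
        simpa using this.symm
      rw [haj, hbj] at h1
      have : q j - c = 0 := by rw [h1]; ring
      linarith
    have h2 := coord_le_dist p q j
    rw [hqj] at h2
    linarith

lemma norm_two_aux (a b : EuclideanSpace ℝ (Fin 2)) (j k : Fin 2) (hjk : j ≠ k)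
    (hj : a j - b j = 2 ∨ a j - b j = -2) (hk : a k = b k) : ‖a - b‖ = 2 := by
  have huniv : (Finset.univ : Finset (Fin 2)) = {j, k} := by
    fin_cases j <;> fin_cases k <;> simp_all <;> decide
  have hsub : ∀ i : Fin 2, (a - b) i = a i - b i := fun i => rfl
  rw [EuclideanSpace.norm_eq, huniv, Finset.sum_insert (by simpa using hjk),
    Finset.sum_singleton, hsub, hsub, hk, sub_self]
  rcases hj with h | h <;> rw [h] <;> norm_num <;>
    rw [show (4:ℝ) = 2 ^ 2 by norm_num, Real.sqrt_sq (by norm_num)]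

end Helpers

/-- On the biunit square with vertices `(-1,-1),(1,-1),(1,1),(-1,1)` and
`p = (x,y)`, `x, y ∈ (-1,1)`, the unique solution of the 4×4 system with rows the
vertex coordinates, `(1,1,1,1)` and `(ρ₁(p), -ρ₂(p), ρ₃(p), -ρ₄(p))`, and right-hand
side `(x, y, 1, 0)`, is the vector of bilinear shape functions. -/
theorem wachspress_biunit_square (x y : ℝ)
    (hx : x ∈ Set.Ioo (-1 : ℝ) 1) (hy : y ∈ Set.Ioo (-1 : ℝ) 1)
    (p : EuclideanSpace ℝ (Fin 2)) (hp : p = ![x, y]) :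
    (Matrix.of ![fun i => biunitSquare i 0, fun i => biunitSquare i 1,
        fun i => (1 : ℝ),
        ![rho biunitSquare 0 p, -rho biunitSquare 1 p,
          rho biunitSquare 2 p, -rho biunitSquare 3 p]] :
        Matrix (Fin 4) (Fin 4) ℝ).mulVec
      ![(1 - x) * (1 - y) / 4, (1 + x) * (1 - y) / 4,
        (1 + x) * (1 + y) / 4, (1 - x) * (1 + y) / 4] = ![x, y, 1, 0] ∧
    ∀ φ : Fin 4 → ℝ,
      (Matrix.of ![fun i => biunitSquare i 0, fun i => biunitSquare i 1,
          fun i => (1 : ℝ),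
          ![rho biunitSquare 0 p, -rho biunitSquare 1 p,
            rho biunitSquare 2 p, -rho biunitSquare 3 p]] :
          Matrix (Fin 4) (Fin 4) ℝ).mulVec φ = ![x, y, 1, 0] →
      φ = ![(1 - x) * (1 - y) / 4, (1 + x) * (1 - y) / 4,
            (1 + x) * (1 + y) / 4, (1 - x) * (1 + y) / 4] := by
  have hp' : p = WithLp.toLp 2 ![x, y] := by rw [← hp]
  subst hp'
  obtain ⟨hx1, hx2⟩ := hx
  obtain ⟨hy1, hy2⟩ := hy
  -- distances to the four edge lines
  have hd0 : hdist biunitSquare 0 (WithLp.toLp 2 ![x, y]) = y + 1 := by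
    rw [hdist, show (0 + 1 : Fin 4) = 1 from rfl,
      infDist_axis 1 0 _ _ _ (-1) (by decide) (by norm_num [biunitSquare, Matrix.cons_val_two, Matrix.cons_val_three, Matrix.tail_cons, Matrix.head_cons])
        (by norm_num [biunitSquare, Matrix.cons_val_two, Matrix.cons_val_three, Matrix.tail_cons, Matrix.head_cons]) (by norm_num [biunitSquare, Matrix.cons_val_two, Matrix.cons_val_three, Matrix.tail_cons, Matrix.head_cons])]
    rw [show (WithLp.toLp 2 ![x, y] : EuclideanSpace ℝ (Fin 2)) 1 = y from rfl]
    rw [show y - (-1) = y + 1 by ring, abs_of_pos (by linarith)]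
  have hd1 : hdist biunitSquare 1 (WithLp.toLp 2 ![x, y]) = 1 - x := by
    rw [hdist, show (1 + 1 : Fin 4) = 2 from rfl,
      infDist_axis 0 1 _ _ _ 1 (by decide) (by norm_num [biunitSquare, Matrix.cons_val_two, Matrix.cons_val_three, Matrix.tail_cons, Matrix.head_cons])
        (by norm_num [biunitSquare, Matrix.cons_val_two, Matrix.cons_val_three, Matrix.tail_cons, Matrix.head_cons]) (by norm_num [biunitSquare, Matrix.cons_val_two, Matrix.cons_val_three, Matrix.tail_cons, Matrix.head_cons])]
    rw [show (WithLp.toLp 2 ![x, y] : EuclideanSpace ℝ (Fin 2)) 0 = x from rfl]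
    rw [abs_of_neg (by linarith)]; ring
  have hd2 : hdist biunitSquare 2 (WithLp.toLp 2 ![x, y]) = 1 - y := by
    rw [hdist, show (2 + 1 : Fin 4) = 3 from rfl,
      infDist_axis 1 0 _ _ _ 1 (by decide) (by norm_num [biunitSquare, Matrix.cons_val_two, Matrix.cons_val_three, Matrix.tail_cons, Matrix.head_cons])
        (by norm_num [biunitSquare, Matrix.cons_val_two, Matrix.cons_val_three, Matrix.tail_cons, Matrix.head_cons]) (by norm_num [biunitSquare, Matrix.cons_val_two, Matrix.cons_val_three, Matrix.tail_cons, Matrix.head_cons])]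
    rw [show (WithLp.toLp 2 ![x, y] : EuclideanSpace ℝ (Fin 2)) 1 = y from rfl]
    rw [abs_of_neg (by linarith)]; ring
  have hd3 : hdist biunitSquare 3 (WithLp.toLp 2 ![x, y]) = x + 1 := by
    rw [hdist, show (3 + 1 : Fin 4) = 0 from rfl,
      infDist_axis 0 1 _ _ _ (-1) (by decide) (by norm_num [biunitSquare, Matrix.cons_val_two, Matrix.cons_val_three, Matrix.tail_cons, Matrix.head_cons])
        (by norm_num [biunitSquare, Matrix.cons_val_two, Matrix.cons_val_three, Matrix.tail_cons, Matrix.head_cons]) (by norm_num [biunitSquare, Matrix.cons_val_two, Matrix.cons_val_three, Matrix.tail_cons, Matrix.head_cons])]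
    rw [show (WithLp.toLp 2 ![x, y] : EuclideanSpace ℝ (Fin 2)) 0 = x from rfl]
    rw [show x - (-1) = x + 1 by ring, abs_of_pos (by linarith)]
  -- side lengths
  have hn01 : ‖biunitSquare 0 - biunitSquare 1‖ = 2 :=
    norm_two_aux _ _ 0 1 (by decide) (by norm_num [biunitSquare, Matrix.cons_val_two, Matrix.cons_val_three, Matrix.tail_cons, Matrix.head_cons]) (by norm_num [biunitSquare, Matrix.cons_val_two, Matrix.cons_val_three, Matrix.tail_cons, Matrix.head_cons])
  have hn03 : ‖biunitSquare 0 - biunitSquare 3‖ = 2 :=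
    norm_two_aux _ _ 1 0 (by decide) (by norm_num [biunitSquare, Matrix.cons_val_two, Matrix.cons_val_three, Matrix.tail_cons, Matrix.head_cons]) (by norm_num [biunitSquare, Matrix.cons_val_two, Matrix.cons_val_three, Matrix.tail_cons, Matrix.head_cons])
  have hn10 : ‖biunitSquare 1 - biunitSquare 0‖ = 2 :=
    norm_two_aux _ _ 0 1 (by decide) (by norm_num [biunitSquare, Matrix.cons_val_two, Matrix.cons_val_three, Matrix.tail_cons, Matrix.head_cons]) (by norm_num [biunitSquare, Matrix.cons_val_two, Matrix.cons_val_three, Matrix.tail_cons, Matrix.head_cons])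
  have hn12 : ‖biunitSquare 1 - biunitSquare 2‖ = 2 :=
    norm_two_aux _ _ 1 0 (by decide) (by norm_num [biunitSquare, Matrix.cons_val_two, Matrix.cons_val_three, Matrix.tail_cons, Matrix.head_cons]) (by norm_num [biunitSquare, Matrix.cons_val_two, Matrix.cons_val_three, Matrix.tail_cons, Matrix.head_cons])
  have hn21 : ‖biunitSquare 2 - biunitSquare 1‖ = 2 :=
    norm_two_aux _ _ 1 0 (by decide) (by norm_num [biunitSquare, Matrix.cons_val_two, Matrix.cons_val_three, Matrix.tail_cons, Matrix.head_cons]) (by norm_num [biunitSquare, Matrix.cons_val_two, Matrix.cons_val_three, Matrix.tail_cons, Matrix.head_cons])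
  have hn23 : ‖biunitSquare 2 - biunitSquare 3‖ = 2 :=
    norm_two_aux _ _ 0 1 (by decide) (by norm_num [biunitSquare, Matrix.cons_val_two, Matrix.cons_val_three, Matrix.tail_cons, Matrix.head_cons]) (by norm_num [biunitSquare, Matrix.cons_val_two, Matrix.cons_val_three, Matrix.tail_cons, Matrix.head_cons])
  have hn32 : ‖biunitSquare 3 - biunitSquare 2‖ = 2 :=
    norm_two_aux _ _ 0 1 (by decide) (by norm_num [biunitSquare, Matrix.cons_val_two, Matrix.cons_val_three, Matrix.tail_cons, Matrix.head_cons]) (by norm_num [biunitSquare, Matrix.cons_val_two, Matrix.cons_val_three, Matrix.tail_cons, Matrix.head_cons])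
  have hn30 : ‖biunitSquare 3 - biunitSquare 0‖ = 2 :=
    norm_two_aux _ _ 1 0 (by decide) (by norm_num [biunitSquare, Matrix.cons_val_two, Matrix.cons_val_three, Matrix.tail_cons, Matrix.head_cons]) (by norm_num [biunitSquare, Matrix.cons_val_two, Matrix.cons_val_three, Matrix.tail_cons, Matrix.head_cons])
  -- the four rho values
  have hr0 : rho biunitSquare 0 (WithLp.toLp 2 ![x, y]) = 4 * ((1 + x) * (1 + y)) := by
    rw [rho, show (0 - 1 : Fin 4) = 3 from rfl, show (0 + 1 : Fin 4) = 1 from rfl,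
      hd3, hd0, hn03, hn01]; ring
  have hr1 : rho biunitSquare 1 (WithLp.toLp 2 ![x, y]) = 4 * ((1 - x) * (1 + y)) := by
    rw [rho, show (1 - 1 : Fin 4) = 0 from rfl, show (1 + 1 : Fin 4) = 2 from rfl,
      hd0, hd1, hn10, hn12]; ring
  have hr2 : rho biunitSquare 2 (WithLp.toLp 2 ![x, y]) = 4 * ((1 - x) * (1 - y)) := by
    rw [rho, show (2 - 1 : Fin 4) = 1 from rfl, show (2 + 1 : Fin 4) = 3 from rfl,
      hd1, hd2, hn21, hn23]; ring
  have hr3 : rho biunitSquare 3 (WithLp.toLp 2 ![x, y]) = 4 * ((1 + x) * (1 - y)) := by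
    rw [rho, show (3 - 1 : Fin 4) = 2 from rfl, show (3 + 1 : Fin 4) = 0 from rfl,
      hd2, hd3, hn32, hn30]; ring
  constructor
  · funext i
    fin_cases i <;>
      simp only [Matrix.mulVec, dotProduct, Fin.sum_univ_four, Matrix.of_apply,
        Matrix.cons_val', Matrix.cons_val_zero, Matrix.cons_val_one, Matrix.head_cons,
        Matrix.cons_val_two, Matrix.tail_cons, Matrix.cons_val_three, Matrix.head_fin_const,
        Matrix.empty_val', Matrix.cons_val_fin_one, Fin.isValue, hr0, hr1, hr2, hr3] <;>
      simp [biunitSquare] <;> ring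
  · intro φ hφ
    have e0 := congrFun hφ 0
    have e1 := congrFun hφ 1
    have e2 := congrFun hφ 2
    have e3 := congrFun hφ 3
    simp only [Matrix.mulVec, dotProduct, Fin.sum_univ_four, Matrix.of_apply,
      Matrix.cons_val', Matrix.cons_val_zero, Matrix.cons_val_one, Matrix.head_cons,
      Matrix.cons_val_two, Matrix.tail_cons, Matrix.cons_val_three, Matrix.head_fin_const,
      Matrix.empty_val', Matrix.cons_val_fin_one, Fin.isValue, hr0, hr1, hr2, hr3]
      at e0 e1 e2 e3
    simp [biunitSquare] at e0 e1 e2 e3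
    funext i
    fin_cases i
    · show φ 0 = (1 - x) * (1 - y) / 4
      linear_combination ((y - 1) / 4) * e0 + ((x - 1) / 4) * e1 + ((1 - x * y) / 4) * e2 +
        (1 / 16) * e3
    · show φ 1 = (1 + x) * (1 - y) / 4
      linear_combination ((1 - y) / 4) * e0 + (-(1 + x) / 4) * e1 + ((1 + x * y) / 4) * e2 +
        (-1 / 16) * e3
    · show φ 2 = (1 + x) * (1 + y) / 4
      linear_combination ((1 + y) / 4) * e0 + ((1 + x) / 4) * e1 + ((1 - x * y) / 4) * e2 +
        (1 / 16) * e3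
    · show φ 3 = (1 - x) * (1 + y) / 4
      linear_combination (-(1 + y) / 4) * e0 + ((1 - x) / 4) * e1 + ((1 + x * y) / 4) * e2 +
        (-1 / 16) * e3
end
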